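/- arXiv:1612.07133 — 4 statements merged into one kernel-verified Lean document; each statement's English description precedes it below -/
import Mathlib

section
/- A permutation x in S_{2n} is a twisted identity (i.e., x = θ(w^{-1})w for some w in S_{2n}, where θ(w) = w_0 w w_0) if and only if w_0 x is a fixed point free involution; in particular, left multiplication by w_0 gives a bijection between the set ι of twisted identities and the set F_{2n} of fixed point free involutions in S_{2n}. -/
open Equiv

/-- Coxeter length of a permutation = number of inversions. -/
def len {N : ℕ} (w : Equiv.Perm (Fin N)) : ℕ :=
  (Finset.univ.filter fun p : Fin N × Fin N => p.1 < p.2 ∧ w p.2 < w p.1).card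

/-- The Bruhat order on the symmetric group: reflexive-transitive closure of
right multiplication by a transposition that increases length. -/
def bruhatLE {N : ℕ} (u v : Equiv.Perm (Fin N)) : Prop :=
  Relation.ReflTransGen
    (fun x y => ∃ t : Equiv.Perm (Fin N), t.IsSwap ∧ y = x * t ∧ len x < len y) u v

/-- The Coxeter generator `s i` (1-based): the transposition of `i` and `i+1`,
i.e. of the 0-based points `i-1` and `i`. -/
def gen (N i : ℕ) : Equiv.Perm (Fin N) :=
  if h : 0 < i ∧ i < N then Equiv.swap ⟨i - 1, by omega⟩ ⟨i, h.2⟩ else 1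

/-- The reverse permutation `w₀`, the longest element. -/
def w0 (N : ℕ) : Equiv.Perm (Fin N) := Fin.revPerm

/-- The automorphism θ(w) = w₀ w w₀. -/
def theta {N : ℕ} (w : Equiv.Perm (Fin N)) : Equiv.Perm (Fin N) := w0 N * w * w0 N

/-- The set ι of twisted identities. -/
def iotaSet (N : ℕ) : Set (Equiv.Perm (Fin N)) := {x | ∃ w, x = theta w⁻¹ * w}

/-- The set of twisted involutions. -/
def twInvSet (N : ℕ) : Set (Equiv.Perm (Fin N)) := {x | theta x = x⁻¹}

/-- Cover relation of the subposet induced by `P` with respect to order relation `le`. -/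
def CovByIn {α : Type*} (le : α → α → Prop) (P : Set α) (x y : α) : Prop :=
  x ∈ P ∧ y ∈ P ∧ le x y ∧ x ≠ y ∧ ∀ z ∈ P, le x z → le z y → z = x ∨ z = y

/-- A special partial matching of the subposet induced by `P` (with maximum `top`)
with respect to the order relation `le`. -/
def IsSPM {α : Type*} (le : α → α → Prop) (P : Set α) (top : α) (M : α → α) : Prop :=
  top ∈ P ∧ (∀ x ∈ P, M x ∈ P) ∧ (∀ x ∈ P, M (M x) = x) ∧
  CovByIn le P (M top) top ∧
  (∀ x ∈ P, CovByIn le P (M x) x ∨ M x = x ∨ CovByIn le P x (M x)) ∧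
  ∀ x ∈ P, ∀ y ∈ P, CovByIn le P x y → M x ≠ y → (le (M x) (M y) ∧ M x ≠ M y)

/-- The lower interval ι[e,w] = {x ∈ ι : x ≤ w}. -/
def iotaIdeal (N : ℕ) (w : Equiv.Perm (Fin N)) : Set (Equiv.Perm (Fin N)) :=
  {x | x ∈ iotaSet N ∧ bruhatLE x w}

/-- The interval ι[u,w] = {x ∈ ι : u ≤ x ≤ w}. -/
def iotaInt (N : ℕ) (u w : Equiv.Perm (Fin N)) : Set (Equiv.Perm (Fin N)) :=
  {x | x ∈ iotaSet N ∧ bruhatLE u x ∧ bruhatLE x w}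

/-- The action of the symbol σ_i on twisted involutions: `x·σ = xs` if `θ(s)xs = x`,
and `x·σ = θ(s)xs` otherwise. -/
noncomputable def sact (N : ℕ) (x : Equiv.Perm (Fin N)) (i : ℕ) : Equiv.Perm (Fin N) := by
  classical
  exact if theta (gen N i) * x * gen N i = x then x * gen N i
        else theta (gen N i) * x * gen N i

/-- The twisted involution `σ_{i₁} ⋯ σ_{i_k}` given by acting on the identity. -/
noncomputable def sword (N : ℕ) (l : List ℕ) : Equiv.Perm (Fin N) := l.foldl (sact N) 1

/-- The set of fixed point free involutions. -/
def fpfInv (N : ℕ) : Set (Equiv.Perm (Fin N)) := {x | x * x = 1 ∧ ∀ i, x i ≠ i}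

lemma w0_sq (N : ℕ) : w0 N * w0 N = 1 := by
  ext i
  simp [w0, Fin.rev_rev]

lemma w0_mem_fpf (n : ℕ) : w0 (2*n) ∈ fpfInv (2*n) := by
  refine ⟨w0_sq _, fun i hi => ?_⟩
  have h := congrArg Fin.val hi
  simp [w0, Fin.val_rev] at h
  have hlt := i.isLt
  omega

lemma fpf_conj {N : ℕ} (y : Equiv.Perm (Fin N)) (hy : y ∈ fpfInv N)
    (g : Equiv.Perm (Fin N)) : g * y * g⁻¹ ∈ fpfInv N := by
  obtain ⟨h1, h2⟩ := hy
  constructor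
  · have : g * y * g⁻¹ * (g * y * g⁻¹) = g * (y * y) * g⁻¹ := by group
    rw [this, h1]; group
  · intro i hi
    have : y (g⁻¹ i) = g⁻¹ i := by
      have := congrArg (fun z => g⁻¹ z) hi
      simpa using this
    exact h2 _ this

lemma fpf_cycleType (n : ℕ) (y : Equiv.Perm (Fin (2*n))) (hy : y ∈ fpfInv (2*n)) :
    y.cycleType = Multiset.replicate n 2 := by
  obtain ⟨h1, h2⟩ := hy
  have hord : orderOf y ∣ 2 := orderOf_dvd_of_pow_eq_one (by rw [pow_two]; exact h1)
  have hall : ∀ a ∈ y.cycleType, a = 2 := by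
    intro a ha
    have hd : a ∣ 2 := dvd_trans (by rw [← Equiv.Perm.lcm_cycleType]; exact Multiset.dvd_lcm ha) hord
    have h2le := Equiv.Perm.two_le_of_mem_cycleType ha
    have := Nat.le_of_dvd (by norm_num) hd
    omega
  have hrep : y.cycleType = Multiset.replicate (Multiset.card y.cycleType) 2 :=
    Multiset.eq_replicate_card.2 hall
  have hsupp : y.support = Finset.univ := by
    ext i; simp [Equiv.Perm.mem_support, h2 i]
  have hsum : y.cycleType.sum = 2 * n := by
    rw [Equiv.Perm.sum_cycleType, hsupp]
    simp
  have hcard : Multiset.card y.cycleType = n := by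
    rw [hrep, Multiset.sum_replicate, smul_eq_mul] at hsum
    omega
  rw [hrep, hcard]

lemma fpf_isConj (n : ℕ) (y z : Equiv.Perm (Fin (2*n))) (hy : y ∈ fpfInv (2*n))
    (hz : z ∈ fpfInv (2*n)) : IsConj y z := by
  rw [Equiv.Perm.isConj_iff_cycleType_eq, fpf_cycleType n y hy, fpf_cycleType n z hz]

/-- `x` is a twisted identity iff `w₀x` is a fixed point free involution;
in particular left multiplication by `w₀` is a bijection from ι onto F_{2n}. -/
theorem stmt2 (n : ℕ) :
    (∀ x : Equiv.Perm (Fin (2*n)), x ∈ iotaSet (2*n) ↔ w0 (2*n) * x ∈ fpfInv (2*n)) ∧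
    Set.BijOn (fun x => w0 (2*n) * x) (iotaSet (2*n)) (fpfInv (2*n)) := by
  have hw0 := w0_sq (2*n)
  have hiff : ∀ x : Equiv.Perm (Fin (2*n)),
      x ∈ iotaSet (2*n) ↔ w0 (2*n) * x ∈ fpfInv (2*n) := by
    intro x
    constructor
    · rintro ⟨w, rfl⟩
      have : w0 (2*n) * (theta w⁻¹ * w) = w⁻¹ * w0 (2*n) * w⁻¹⁻¹ := by
        simp only [theta]
        rw [show w0 (2*n) * (w0 (2*n) * w⁻¹ * w0 (2*n) * w) =
            w0 (2*n) * w0 (2*n) * w⁻¹ * w0 (2*n) * w by group, hw0]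
        group
      rw [this]
      exact fpf_conj _ (w0_mem_fpf n) _
    · intro hx
      have hc := fpf_isConj n (w0 (2*n)) (w0 (2*n) * x) (w0_mem_fpf n) hx
      rw [isConj_iff] at hc
      obtain ⟨g, hg⟩ := hc
      refine ⟨g⁻¹, ?_⟩
      have : x = w0 (2*n) * (g * w0 (2*n) * g⁻¹) := by
        rw [hg, ← mul_assoc, hw0, one_mul]
      rw [this, theta]
      group
  refine ⟨hiff, fun x hx => (hiff x).1 hx, fun a _ b _ h => by
    simpa using congrArg (fun z => w0 (2*n) * z) h, fun y hy => ?_⟩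
  refine ⟨w0 (2*n) * y, ?_, show w0 (2*n) * (w0 (2*n) * y) = y by
    rw [← mul_assoc, hw0, one_mul]⟩
  rw [hiff, ← mul_assoc, hw0, one_mul]
  exact hy
end

section
/- If x is a twisted identity in S_{2n} (i.e., x = θ(w^{-1})w for some w, where θ(w) = w_0ww_0), then the Coxeter length ℓ(x) is even. -/
open Equiv

lemma signAux_eq_neg_one_pow_len {N : ℕ} (x : Equiv.Perm (Fin N)) :
    Equiv.Perm.signAux x = (-1 : ℤˣ) ^ (len x) := by
  classical
  unfold Equiv.Perm.signAux len
  rw [Finset.prod_ite, Finset.prod_const, Finset.prod_const_one, mul_one]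
  congr 1
  refine Finset.card_bij' (fun a _ => (a.2, a.1)) (fun p _ => ⟨p.2, p.1⟩) ?_ ?_ ?_ ?_
  · rintro ⟨a1, a2⟩ ha
    simp only [Finset.mem_filter, Equiv.Perm.mem_finPairsLT] at ha
    have hne : x a1 ≠ x a2 := fun h => (ne_of_gt ha.1) (x.injective h)
    simp only [Finset.mem_filter, Finset.mem_univ, true_and]
    exact ⟨ha.1, lt_of_le_of_ne ha.2 hne⟩
  · rintro ⟨p1, p2⟩ hp
    simp only [Finset.mem_filter, Finset.mem_univ, true_and] at hp
    simp only [Finset.mem_filter, Equiv.Perm.mem_finPairsLT]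
    exact ⟨hp.1, le_of_lt hp.2⟩
  · rintro ⟨a1, a2⟩ _; rfl
  · rintro ⟨p1, p2⟩ _; rfl

/-- every twisted identity has even Coxeter length. -/
theorem stmt4 (n : ℕ) (x : Equiv.Perm (Fin (2*n))) (hx : x ∈ iotaSet (2*n)) :
    Even (len x) := by
  obtain ⟨w, hw⟩ := hx
  have h1 : Equiv.Perm.signAux x = 1 := by
    rw [hw]
    unfold theta
    rw [Equiv.Perm.signAux_mul, Equiv.Perm.signAux_mul, Equiv.Perm.signAux_mul,
      Equiv.Perm.signAux_inv]
    generalize Equiv.Perm.signAux (w0 (2*n)) = a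
    generalize Equiv.Perm.signAux w = b
    have ha := Int.units_mul_self a
    have hb := Int.units_mul_self b
    calc a * b * a * b = (a * a) * (b * b) := by
          rw [mul_assoc (a*b) a b]; exact mul_mul_mul_comm a b a b
    _ = 1 := by rw [ha, hb, one_mul]
  rw [signAux_eq_neg_one_pow_len] at h1
  have : (-1 : ℤˣ) ≠ 1 := by decide
  exact (neg_one_pow_eq_one_iff_even this).mp h1
end

section
/- Let τ = s_{i+1}s_i s_{i-1} s_{2n-i-1} s_{2n-i} s_{2n-i+1} (the twisted involution with S-expression σ_{i+1}σ_iσ_{i-1}) for 2 ≤ i ≤ n-2, and let w be a twisted involution in S_{2n} (θ(w) = w^{-1} where θ(w) = w_0ww_0). Then τ ≤ w in Bruhat order fails if and only if w maps the set {1, ..., i-1} into {1, ..., i+1}. -/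
open Equiv

namespace SAux

open Finset

variable {N : ℕ}

def rk (w : Perm (Fin N)) (p q : ℕ) : ℕ :=
  (Finset.univ.filter fun k : Fin N => (k : ℕ) < p ∧ ((w k : ℕ)) < q).card

lemma card_val_lt (p : ℕ) (hp : p ≤ N) :
    (Finset.univ.filter fun k : Fin N => (k : ℕ) < p).card = p := by
  have he : (Finset.univ.filter fun k : Fin N => (k : ℕ) < p)
      = (Finset.range p).attachFin (fun m hm => lt_of_lt_of_le (Finset.mem_range.mp hm) hp) := by
    ext k
    rw [Finset.mem_filter, Finset.mem_attachFin, Finset.mem_range]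
    exact ⟨fun h => h.2, fun h => ⟨Finset.mem_univ _, h⟩⟩
  rw [he, Finset.card_attachFin, Finset.card_range]

lemma rk_le_left (w : Perm (Fin N)) (p q : ℕ) : rk w p q ≤ p := by
  unfold rk
  calc _ ≤ (Finset.range p).card := by
        refine Finset.card_le_card_of_injOn (fun k => (k : ℕ)) ?_ ?_
        · intro a ha; simp only [Finset.mem_coe, Finset.mem_filter] at ha; exact Finset.mem_range.mpr ha.2.1
        · intro a _ b _ h; exact Fin.val_injective h
    _ = p := Finset.card_range p

lemma rk_le_right (w : Perm (Fin N)) (p q : ℕ) : rk w p q ≤ q := by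
  unfold rk
  calc _ ≤ (Finset.range q).card := by
        refine Finset.card_le_card_of_injOn (fun k => ((w k) : ℕ)) ?_ ?_
        · intro a ha; simp only [Finset.mem_coe, Finset.mem_filter] at ha; exact Finset.mem_range.mpr ha.2.2
        · intro a _ b _ h; exact w.injective (Fin.val_injective h)
    _ = q := Finset.card_range q

lemma rk_le_N (w : Perm (Fin N)) (p q : ℕ) : rk w p q ≤ N := by
  calc rk w p q ≤ Finset.univ.card := Finset.card_filter_le _ _
    _ = N := by simp

lemma rk_mono_right (w : Perm (Fin N)) (p : ℕ) {q q' : ℕ} (h : q ≤ q') :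
    rk w p q ≤ rk w p q' := by
  apply Finset.card_le_card
  intro k hk; rw [Finset.mem_filter] at hk ⊢
  exact ⟨hk.1, hk.2.1, lt_of_lt_of_le hk.2.2 h⟩

lemma rk_mono_left (w : Perm (Fin N)) {p p' : ℕ} (q : ℕ) (h : p ≤ p') :
    rk w p q ≤ rk w p' q := by
  apply Finset.card_le_card
  intro k hk; rw [Finset.mem_filter] at hk ⊢
  exact ⟨hk.1, lt_of_lt_of_le hk.2.1 h, hk.2.2⟩

lemma rk_add_left (w : Perm (Fin N)) {p p' : ℕ} (q : ℕ) (h : p ≤ p') :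
    rk w p' q ≤ rk w p q + (p' - p) := by
  have hsub : (Finset.univ.filter fun k : Fin N => (k : ℕ) < p' ∧ ((w k : ℕ)) < q)
      ⊆ (Finset.univ.filter fun k : Fin N => (k : ℕ) < p ∧ ((w k : ℕ)) < q)
        ∪ (Finset.univ.filter fun k : Fin N => p ≤ (k : ℕ) ∧ (k : ℕ) < p') := by
    intro k hk; rw [Finset.mem_filter] at hk; rw [Finset.mem_union, Finset.mem_filter, Finset.mem_filter]
    rcases lt_or_ge (k : ℕ) p with h' | h'
    · exact Or.inl ⟨hk.1, h', hk.2.2⟩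
    · exact Or.inr ⟨hk.1, h', hk.2.1⟩
  have hB : (Finset.univ.filter fun k : Fin N => p ≤ (k : ℕ) ∧ (k : ℕ) < p').card ≤ p' - p := by
    calc _ ≤ (Finset.range (p' - p)).card := by
          refine Finset.card_le_card_of_injOn (fun k => (k : ℕ) - p) ?_ ?_
          · intro a ha; rw [Finset.mem_coe, Finset.mem_filter] at ha; rw [Finset.mem_coe, Finset.mem_range]
            show (a : ℕ) - p < p' - p; omega
          · intro a ha b hb hab
            rw [Finset.mem_coe, Finset.mem_filter] at ha hb
            have hab' : (a : ℕ) - p = (b : ℕ) - p := hab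
            exact Fin.val_injective (by omega)
      _ = p' - p := Finset.card_range _
  unfold rk
  calc _ ≤ _ := Finset.card_le_card hsub
    _ ≤ _ + _ := Finset.card_union_le _ _
    _ ≤ _ + (p' - p) := Nat.add_le_add le_rfl hB

lemma rk_band (w : Perm (Fin N)) (p : ℕ) {q Q : ℕ} (h : q ≤ Q) :
    rk w p q + (Finset.univ.filter fun k : Fin N =>
      (k : ℕ) < p ∧ q ≤ ((w k : ℕ)) ∧ ((w k : ℕ)) < Q).card = rk w p Q := by
  unfold rk
  rw [← Finset.card_union_of_disjoint]
  · congr 1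
    ext k
    simp only [Finset.mem_union, Finset.mem_filter, Finset.mem_univ, true_and]
    omega
  · rw [Finset.disjoint_left]
    intro k hk1 hk2
    rw [Finset.mem_filter] at hk1 hk2
    omega

lemma rk_succ (w : Perm (Fin N)) (j : Fin N) (q : ℕ) :
    rk w ((j : ℕ) + 1) q = rk w j q + if ((w j : ℕ)) < q then 1 else 0 := by
  unfold rk
  split_ifs with h
  · rw [← Finset.card_insert_of_notMem (s :=
      Finset.univ.filter fun k : Fin N => (k : ℕ) < (j:ℕ) ∧ ((w k : ℕ)) < q) (a := j)
      (by simp [Finset.mem_filter])]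
    congr 1
    ext k
    simp only [Finset.mem_insert, Finset.mem_filter, Finset.mem_univ, true_and]
    constructor
    · rintro ⟨h1, h2⟩
      rcases eq_or_lt_of_le (Nat.lt_succ_iff.mp h1) with h3 | h3
      · exact Or.inl (Fin.val_injective h3)
      · exact Or.inr ⟨h3, h2⟩
    · rintro (rfl | ⟨h1, h2⟩)
      · exact ⟨Nat.lt_succ_self _, h⟩
      · exact ⟨by omega, h2⟩
  · have he : (Finset.univ.filter fun k : Fin N => (k : ℕ) < (j:ℕ) + 1 ∧ ((w k : ℕ)) < q)
        = (Finset.univ.filter fun k : Fin N => (k : ℕ) < (j:ℕ) ∧ ((w k : ℕ)) < q) := by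
      ext k
      simp only [Finset.mem_filter, Finset.mem_univ, true_and]
      constructor
      · rintro ⟨h1, h2⟩
        refine ⟨?_, h2⟩
        rcases eq_or_lt_of_le (Nat.lt_succ_iff.mp h1) with h3 | h3
        · exact absurd ((congrArg (fun z => ((w z : ℕ))) (Fin.val_injective h3)) ▸ h2) h
        · exact h3
      · rintro ⟨h1, h2⟩; exact ⟨by omega, h2⟩
    rw [he, Nat.add_zero]

lemma rk_agree (u w : Perm (Fin N)) (m q : ℕ) (h : ∀ k : Fin N, (k : ℕ) < m → u k = w k) :
    rk u m q = rk w m q := by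
  unfold rk
  congr 1
  apply Finset.filter_congr
  intro k _
  constructor
  · rintro ⟨h1, h2⟩; exact ⟨h1, (h k h1) ▸ h2⟩
  · rintro ⟨h1, h2⟩; exact ⟨h1, (h k h1).symm ▸ h2⟩


lemma rk_mul_swap (w : Perm (Fin N)) (a b : Fin N) (hab : a < b) (p q : ℕ) :
    rk (w * Equiv.swap a b) p q
      + (if (a : ℕ) < p ∧ p ≤ (b : ℕ) ∧ ((w a : ℕ)) < q then 1 else 0)
    = rk w p q
      + (if (a : ℕ) < p ∧ p ≤ (b : ℕ) ∧ ((w b : ℕ)) < q then 1 else 0) := by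
  classical
  have hab' : (a : ℕ) < (b : ℕ) := hab
  have hne : a ≠ b := Fin.ne_of_lt hab
  -- reindex
  have hre : rk (w * Equiv.swap a b) p q
      = (Finset.univ.filter fun k : Fin N =>
          ((Equiv.swap a b k : Fin N) : ℕ) < p ∧ ((w k : ℕ)) < q).card := by
    unfold rk
    apply Finset.card_nbij' (fun k => Equiv.swap a b k) (fun k => Equiv.swap a b k)
    · intro k hk
      rw [Finset.mem_coe, Finset.mem_filter] at hk ⊢
      refine ⟨Finset.mem_univ _, ?_, ?_⟩
      · rw [Equiv.swap_apply_self]; exact hk.2.1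
      · have : (w * Equiv.swap a b) k = w (Equiv.swap a b k) := rfl
        rw [← this]; exact hk.2.2
    · intro k hk
      rw [Finset.mem_coe, Finset.mem_filter] at hk ⊢
      refine ⟨Finset.mem_univ _, hk.2.1, ?_⟩
      show ((w (Equiv.swap a b (Equiv.swap a b k)) : ℕ)) < q
      rw [Equiv.swap_apply_self]; exact hk.2.2
    · intro k _; exact Equiv.swap_apply_self a b k
    · intro k _; exact Equiv.swap_apply_self a b k
  rw [hre]
  unfold rk
  -- sum form
  have hsum : ∀ (P : Fin N → Prop) [DecidablePred P],
      (Finset.univ.filter P).card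
        = ((if P a then 1 else 0) + (if P b then 1 else 0))
          + ∑ k ∈ (Finset.univ.erase a).erase b, (if P k then 1 else 0) := by
    intro P _
    rw [Finset.card_filter]
    rw [← Finset.add_sum_erase _ _ (Finset.mem_univ a)]
    rw [← Finset.add_sum_erase _ _ (Finset.mem_erase.mpr ⟨(Fin.ne_of_lt hab).symm, Finset.mem_univ b⟩)]
    ring
  rw [hsum, hsum]
  have htail : ∑ k ∈ (Finset.univ.erase a).erase b,
        (if ((Equiv.swap a b k : Fin N) : ℕ) < p ∧ ((w k : ℕ)) < q then 1 else 0)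
      = ∑ k ∈ (Finset.univ.erase a).erase b,
        (if (k : ℕ) < p ∧ ((w k : ℕ)) < q then 1 else 0) := by
    apply Finset.sum_congr rfl
    intro k hk
    rw [Finset.mem_erase, Finset.mem_erase] at hk
    rw [Equiv.swap_apply_of_ne_of_ne hk.2.1 hk.1]
  rw [htail]
  have ea : Equiv.swap a b a = b := Equiv.swap_apply_left a b
  have eb : Equiv.swap a b b = a := Equiv.swap_apply_right a b
  rw [ea, eb]
  by_cases h1 : (a : ℕ) < p <;> by_cases h2 : (b : ℕ) < p <;>
    by_cases h3 : ((w a : ℕ)) < q <;> by_cases h4 : ((w b : ℕ)) < q <;>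
      simp only [h1, h2, h3, h4, true_and, false_and, and_true, and_false, if_true, if_false,
        and_self] <;>
      · first
        | omega
        | (split_ifs <;> omega)

lemma len_lt_of_swap (w : Perm (Fin N)) (a b : Fin N) (hab : a < b) (hv : w a < w b) :
    len w < len (w * Equiv.swap a b) := by
  classical
  have hne : a ≠ b := Fin.ne_of_lt hab
  set t := Equiv.swap a b with ht
  have hta : t a = b := Equiv.swap_apply_left a b
  have htb : t b = a := Equiv.swap_apply_right a b
  have htf : ∀ x : Fin N, x ≠ a → x ≠ b → t x = x := fun x h1 h2 => Equiv.swap_apply_of_ne_of_ne h1 h2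
  have happ : ∀ x : Fin N, (w * t) x = w (t x) := fun x => rfl
  set Iw := Finset.univ.filter (fun pq : Fin N × Fin N => pq.1 < pq.2 ∧ w pq.2 < w pq.1) with hIw
  set Iw' := Finset.univ.filter (fun pq : Fin N × Fin N => pq.1 < pq.2 ∧ (w * t) pq.2 < (w * t) pq.1) with hIw'
  set F : Fin N × Fin N → Fin N × Fin N := fun pq =>
    (if b < pq.2 then t pq.1 else pq.1, if pq.1 < a then t pq.2 else pq.2) with hF
  have hF1 : ∀ pq : Fin N × Fin N, pq.1 < a →
      F pq = (pq.1, t pq.2) := by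
    intro pq h
    have h1 : pq.1 ≠ a := Fin.ne_of_lt h
    have h2 : pq.1 ≠ b := Fin.ne_of_lt (lt_trans h hab)
    simp only [hF, if_pos h]
    congr 1
    split_ifs with h'
    · exact htf _ h1 h2
    · rfl
  have hF2 : ∀ pq : Fin N × Fin N, ¬ pq.1 < a →
      F pq = (if b < pq.2 then t pq.1 else pq.1, pq.2) := by
    intro pq h
    simp only [hF, if_neg h]
  -- F ∘ F = id on ordered pairs
  have hFF : ∀ pq : Fin N × Fin N, pq.1 < pq.2 → F (F pq) = pq := by
    rintro ⟨p, q⟩ hpq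
    rcases lt_trichotomy p a with hpa | heq | hpa
    · rw [hF1 ⟨p, q⟩ hpa]
      rw [hF1 (⟨p, t q⟩ : Fin N × Fin N) hpa]
      have : t (t q) = q := Equiv.swap_apply_self a b q
      rw [this]
    · rw [heq]
      -- p = a
      rw [hF2 ⟨a, q⟩ (lt_irrefl a)]
      by_cases hq : b < q
      · rw [if_pos hq, hta]
        rw [hF2 (⟨b, q⟩ : Fin N × Fin N) (lt_asymm hab)]
        simp only [if_pos hq, htb]
      · rw [if_neg hq]
        rw [hF2 (⟨a, q⟩ : Fin N × Fin N) (lt_irrefl a)]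
        simp only [if_neg hq]
    · -- a < p
      rw [hF2 ⟨p, q⟩ (not_lt_of_gt hpa)]
      by_cases hq : b < q
      · rw [if_pos hq]
        have hnlt : ¬ t p < a := by
          by_cases hp : p = b
          · rw [hp, htb]; exact lt_irrefl a
          · rw [htf p (Fin.ne_of_gt hpa) hp]; exact not_lt_of_gt hpa
        rw [hF2 (⟨t p, q⟩ : Fin N × Fin N) hnlt]
        simp only [if_pos hq]
        rw [Equiv.swap_apply_self]
      · rw [if_neg hq]
        rw [hF2 (⟨p, q⟩ : Fin N × Fin N) (not_lt_of_gt hpa)]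
        simp only [if_neg hq]
  -- membership
  have hmem : ∀ pq : Fin N × Fin N, pq ∈ Iw → F pq ∈ Iw' := by
    rintro ⟨p, q⟩ hpq
    rw [hIw, Finset.mem_filter] at hpq
    obtain ⟨-, hord, hinv⟩ := hpq
    rw [hIw', Finset.mem_filter]
    refine ⟨Finset.mem_univ _, ?_⟩
    rcases lt_trichotomy p a with hpa | heq | hpa
    · rw [hF1 ⟨p, q⟩ hpa]
      have h1 : p ≠ a := Fin.ne_of_lt hpa
      have h2 : p ≠ b := Fin.ne_of_lt (lt_trans hpa hab)
      constructor
      · show p < t q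
        by_cases hqa : q = a
        · rw [hqa, hta]; exact lt_trans hpa hab
        · by_cases hqb : q = b
          · rw [hqb, htb]; exact hpa
          · rw [htf q hqa hqb]; exact hord
      · show (w * t) (t q) < (w * t) p
        rw [happ, happ, Equiv.swap_apply_self, htf p h1 h2]
        exact hinv
    · -- p = a
      rw [heq] at hord hinv ⊢
      have hqa : q ≠ a := Fin.ne_of_gt hord
      have hqb : q ≠ b := by
        intro h; rw [h] at hinv; exact absurd hv (not_lt_of_gt hinv)
      rw [hF2 ⟨a, q⟩ (lt_irrefl a)]
      by_cases hq : b < q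
      · rw [if_pos hq, hta]
        refine ⟨hq, ?_⟩
        show (w * t) q < (w * t) b
        rw [happ, happ, htb, htf q hqa hqb]
        exact hinv
      · rw [if_neg hq]
        refine ⟨hord, ?_⟩
        show (w * t) q < (w * t) a
        rw [happ, happ, hta, htf q hqa hqb]
        exact lt_trans hinv hv
    · -- a < p
      have hpb : p ≠ a := Fin.ne_of_gt hpa
      rw [hF2 ⟨p, q⟩ (not_lt_of_gt hpa)]
      by_cases hq : b < q
      · rw [if_pos hq]
        have hqa : q ≠ a := Fin.ne_of_gt (lt_trans hab hq)
        have hqb : q ≠ b := Fin.ne_of_gt hq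
        by_cases hp : p = b
        · rw [hp, htb]
          exact ⟨lt_trans hab hq, by
            show (w * t) q < (w * t) a
            rw [happ, happ, hta, htf q hqa hqb]
            rw [hp] at hinv; exact hinv⟩
        · rw [htf p hpb hp]
          exact ⟨hord, by
            show (w * t) q < (w * t) p
            rw [happ, happ, htf q hqa hqb, htf p hpb hp]
            exact hinv⟩
      · rw [if_neg hq]
        refine ⟨hord, ?_⟩
        have hpb' : p ≠ b := by
          intro h
          rw [h] at hord
          exact hq hord
        show (w * t) q < (w * t) p
        rw [happ, happ, htf p hpb hpb']
        by_cases hqb : q = b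
        · rw [hqb, htb]
          rw [hqb] at hinv
          exact lt_trans hv hinv
        · have hqa : q ≠ a := Fin.ne_of_gt (lt_trans hpa hord)
          rw [htf q hqa hqb]
          exact hinv
  -- conclude
  have hinj : Set.InjOn F Iw := by
    intro x hx y hy hxy
    rw [Finset.mem_coe, hIw, Finset.mem_filter] at hx hy
    rw [← hFF x hx.2.1, hxy, hFF y hy.2.1]
  have himg : Iw.image F ⊆ Iw' := by
    intro x hx
    rw [Finset.mem_image] at hx
    obtain ⟨pq, hpq, rfl⟩ := hx
    exact hmem pq hpq
  have hab_mem : (a, b) ∈ Iw' := by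
    rw [hIw', Finset.mem_filter]
    refine ⟨Finset.mem_univ _, hab, ?_⟩
    show (w * t) b < (w * t) a
    rw [happ, happ, hta, htb]
    exact hv
  have hab_not : (a, b) ∉ Iw.image F := by
    intro h
    rw [Finset.mem_image] at h
    obtain ⟨pq, hpq, heq⟩ := h
    rw [hIw, Finset.mem_filter] at hpq
    have : pq = (a, b) := by
      rw [← hFF pq hpq.2.1, heq]
      rw [hF2 (a, b) (lt_irrefl a)]
      simp only [if_neg (lt_irrefl b)]
    rw [this] at hpq
    exact absurd hv (not_lt_of_gt hpq.2.2)
  have hcard : Iw.card = (Iw.image F).card := (Finset.card_image_of_injOn hinj).symm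
  have hlt : (Iw.image F).card < Iw'.card := by
    apply Finset.card_lt_card
    rw [Finset.ssubset_iff_of_subset himg]
    exact ⟨(a, b), hab_mem, hab_not⟩
  show Iw.card < Iw'.card
  rw [hcard]; exact hlt


lemma rk_swap_le (x : Perm (Fin N)) (a b : Fin N) (hab : a < b)
    (hv : (x a : ℕ) < (x b : ℕ)) (p q : ℕ) :
    rk (x * Equiv.swap a b) p q ≤ rk x p q := by
  have h := rk_mul_swap x a b hab p q
  have : ((x b : ℕ)) < q → ((x a : ℕ)) < q := fun h' => lt_trans hv h'
  split_ifs at h <;> omega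

lemma bruhat_to_dom {u w : Perm (Fin N)} (h : bruhatLE u w) :
    ∀ p q, rk w p q ≤ rk u p q := by
  induction h with
  | refl => exact fun p q => le_rfl
  | tail _ hstep ih =>
    rename_i x y _
    intro p q
    refine le_trans ?_ (ih p q)
    obtain ⟨t, hsw, rfl, hlen⟩ := hstep
    obtain ⟨c, d, hcd, rfl⟩ := hsw
    rcases hcd.lt_or_gt with hlt | hlt
    · -- c < d
      rcases lt_trichotomy ((x c : ℕ)) ((x d : ℕ)) with hv | hv | hv
      · exact rk_swap_le x c d hlt hv p q
      · exact absurd (x.injective (Fin.val_injective hv) : c = d) hcd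
      · exfalso
        have h2 : (x * Equiv.swap c d) c = x d := by
          show x (Equiv.swap c d c) = x d
          rw [Equiv.swap_apply_left]
        have h3 : (x * Equiv.swap c d) d = x c := by
          show x (Equiv.swap c d d) = x c
          rw [Equiv.swap_apply_right]
        have := len_lt_of_swap (x * Equiv.swap c d) c d hlt
          (by rw [h2, h3]; exact hv)
        rw [mul_assoc, Equiv.swap_mul_self, mul_one] at this
        omega
    · -- d < c : swap c d = swap d c
      rw [Equiv.swap_comm] at *
      rcases lt_trichotomy ((x d : ℕ)) ((x c : ℕ)) with hv | hv | hv
      · exact rk_swap_le x d c hlt hv p q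
      · exact absurd (x.injective (Fin.val_injective hv) : d = c) (Ne.symm hcd)
      · exfalso
        have h2 : (x * Equiv.swap d c) d = x c := by
          show x (Equiv.swap d c d) = x c
          rw [Equiv.swap_apply_left]
        have h3 : (x * Equiv.swap d c) c = x d := by
          show x (Equiv.swap d c c) = x d
          rw [Equiv.swap_apply_right]
        have := len_lt_of_swap (x * Equiv.swap d c) d c hlt
          (by rw [h2, h3]; exact hv)
        rw [mul_assoc, Equiv.swap_mul_self, mul_one] at this
        omega

def M (u : Perm (Fin N)) : ℕ :=
  ∑ p ∈ Finset.range (N + 1), ∑ q ∈ Finset.range (N + 1), rk u p q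

lemma step_lemma (u w : Perm (Fin N)) (hdom : ∀ p q, rk w p q ≤ rk u p q)
    (hne : u ≠ w) :
    ∃ t : Perm (Fin N), t.IsSwap ∧ (∀ p q, rk w p q ≤ rk (u * t) p q)
      ∧ len u < len (u * t) ∧ M (u * t) < M u := by
  classical
  -- least differing index
  have hDne : (Finset.univ.filter fun k : Fin N => u k ≠ w k).Nonempty := by
    by_contra hc
    rw [Finset.not_nonempty_iff_eq_empty, Finset.filter_eq_empty_iff] at hc
    exact hne (Equiv.ext fun k => not_not.mp (hc (Finset.mem_univ k)))
  set j := (Finset.univ.filter fun k : Fin N => u k ≠ w k).min' hDne with hj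
  have hjmem : u j ≠ w j := by
    have := (Finset.univ.filter fun k : Fin N => u k ≠ w k).min'_mem hDne
    rw [Finset.mem_filter] at this; exact this.2
  have hagree : ∀ k : Fin N, k < j → u k = w k := by
    intro k hk
    by_contra hc
    have : j ≤ k := Finset.min'_le (Finset.univ.filter fun k : Fin N => u k ≠ w k) k (Finset.mem_filter.mpr ⟨Finset.mem_univ _, hc⟩)
    exact absurd hk (not_lt_of_ge this)
  have hagree' : ∀ k : Fin N, (k : ℕ) < (j : ℕ) → u k = w k := fun k hk => hagree k hk
  -- u j < w j
  have hujwj : (u j : ℕ) < (w j : ℕ) := by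
    rcases lt_trichotomy ((u j : ℕ)) ((w j : ℕ)) with h | h | h
    · exact h
    · exact absurd (Fin.val_injective h) hjmem
    · exfalso
      have h1 := hdom ((j : ℕ) + 1) ((w j : ℕ) + 1)
      rw [rk_succ, rk_succ] at h1
      rw [rk_agree u w (j : ℕ) ((w j : ℕ) + 1) hagree'] at h1
      rw [if_pos (Nat.lt_succ_self _), if_neg (by omega)] at h1
      omega
  -- least y in C
  have hCne : (Finset.univ.filter fun k : Fin N =>
      j < k ∧ (u j : ℕ) < (u k : ℕ) ∧ (u k : ℕ) ≤ (w j : ℕ)).Nonempty := by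
    refine ⟨u.symm (w j), ?_⟩
    rw [Finset.mem_filter]
    have hval : u (u.symm (w j)) = w j := u.apply_symm_apply _
    have hne1 : j ≠ u.symm (w j) := by
      intro h
      rw [← h] at hval
      exact hjmem hval
    have hlt : j < u.symm (w j) := by
      rcases lt_trichotomy j (u.symm (w j)) with h | h | h
      · exact h
      · exact absurd h hne1
      · exfalso
        have := hagree _ h
        rw [hval] at this
        exact absurd (w.injective this.symm) (Ne.symm hne1)
    exact ⟨Finset.mem_univ _, hlt, by rw [hval]; exact hujwj, by rw [hval]⟩
  set y := (Finset.univ.filter fun k : Fin N =>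
      j < k ∧ (u j : ℕ) < (u k : ℕ) ∧ (u k : ℕ) ≤ (w j : ℕ)).min' hCne with hy
  have hymem : j < y ∧ (u j : ℕ) < (u y : ℕ) ∧ (u y : ℕ) ≤ (w j : ℕ) := by
    have := Finset.min'_mem _ hCne
    rw [Finset.mem_filter] at this
    exact this.2
  have hymin : ∀ k : Fin N, j < k → k < y → ¬((u j : ℕ) < (u k : ℕ) ∧ (u k : ℕ) ≤ (w j : ℕ)) := by
    intro k h1 h2 hc
    have : y ≤ k := Finset.min'_le (Finset.univ.filter fun k : Fin N => j < k ∧ (u j : ℕ) < (u k : ℕ) ∧ (u k : ℕ) ≤ (w j : ℕ)) k (Finset.mem_filter.mpr ⟨Finset.mem_univ _, h1, hc⟩)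
    exact absurd h2 (not_lt_of_ge this)
  obtain ⟨hjy, hujuy, huywj⟩ := hymem
  -- the key claim
  have claim : ∀ p q : ℕ, (j : ℕ) < p → p ≤ (y : ℕ) → (u j : ℕ) < q → q ≤ (w j : ℕ) →
      rk w p q < rk u p q := by
    intro p q hp1 hp2 hq1 hq2
    set Q := (w j : ℕ) + 1 with hQ
    have hAu := rk_band u p (show q ≤ Q by omega)
    have hBw := rk_band w p (show q ≤ Q by omega)
    set Au := Finset.univ.filter fun k : Fin N =>
      (k : ℕ) < p ∧ q ≤ ((u k : ℕ)) ∧ ((u k : ℕ)) < Q with hAuDef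
    set Bw := Finset.univ.filter fun k : Fin N =>
      (k : ℕ) < p ∧ q ≤ ((w k : ℕ)) ∧ ((w k : ℕ)) < Q with hBwDef
    have hjBw : j ∈ Bw := by
      rw [hBwDef, Finset.mem_filter]
      exact ⟨Finset.mem_univ _, hp1, hq2, by omega⟩
    have hsub : Au ⊆ Bw.erase j := by
      intro k hk
      rw [hAuDef, Finset.mem_filter] at hk
      obtain ⟨-, hk1, hk2, hk3⟩ := hk
      rcases lt_trichotomy k j with hkj | hkj | hkj
      · rw [Finset.mem_erase]
        refine ⟨Fin.ne_of_lt hkj, ?_⟩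
        rw [hBwDef, Finset.mem_filter]
        rw [hagree k hkj] at hk2 hk3
        exact ⟨Finset.mem_univ _, hk1, hk2, hk3⟩
      · exfalso; rw [hkj] at hk2; omega
      · exfalso
        have hky : k < y := by
          have : (k : ℕ) < (y : ℕ) := lt_of_lt_of_le hk1 hp2
          exact this
        exact hymin k hkj hky ⟨by omega, by omega⟩
    have hcards : Au.card < Bw.card := by
      have h1 : Au.card ≤ (Bw.erase j).card := Finset.card_le_card hsub
      have h2 : (Bw.erase j).card = Bw.card - 1 := Finset.card_erase_of_mem hjBw
      have h3 : 1 ≤ Bw.card := Finset.card_pos.mpr ⟨j, hjBw⟩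
      omega
    have hdomQ := hdom p Q
    omega
  refine ⟨Equiv.swap j y, ⟨j, y, Fin.ne_of_lt hjy, rfl⟩, ?_, ?_, ?_⟩
  · -- dominance preserved
    intro p q
    have h := rk_mul_swap u j y hjy p q
    by_cases hreg : (j : ℕ) < p ∧ p ≤ (y : ℕ) ∧ (u j : ℕ) < q ∧ q ≤ (u y : ℕ)
    · have hc := claim p q hreg.1 hreg.2.1 hreg.2.2.1 (le_trans hreg.2.2.2 huywj)
      rw [if_pos ⟨hreg.1, hreg.2.1, hreg.2.2.1⟩, if_neg (by omega)] at h
      omega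
    · have hle := hdom p q
      split_ifs at h <;> omega
  · exact len_lt_of_swap u j y hjy hujuy
  · -- measure decreases
    have hle : ∀ p q, rk (u * Equiv.swap j y) p q ≤ rk u p q :=
      rk_swap_le u j y hjy hujuy
    have hstrict : rk (u * Equiv.swap j y) ((j : ℕ) + 1) ((u j : ℕ) + 1) <
        rk u ((j : ℕ) + 1) ((u j : ℕ) + 1) := by
      have h := rk_mul_swap u j y hjy ((j : ℕ) + 1) ((u j : ℕ) + 1)
      have hys : (j : ℕ) + 1 ≤ (y : ℕ) := hjy
      rw [if_pos ⟨Nat.lt_succ_self _, hys, Nat.lt_succ_self _⟩, if_neg (by omega)] at h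
      omega
    unfold M
    apply Finset.sum_lt_sum
    · intro p _
      exact Finset.sum_le_sum fun q _ => hle p q
    · refine ⟨(j : ℕ) + 1, Finset.mem_range.mpr (by omega), ?_⟩
      apply Finset.sum_lt_sum
      · intro q _; exact hle _ q
      · exact ⟨(u j : ℕ) + 1, Finset.mem_range.mpr (by have := (u j).isLt; omega), hstrict⟩

lemma dom_to_bruhat : ∀ (m : ℕ) (u w : Perm (Fin N)), M u ≤ m →
    (∀ p q, rk w p q ≤ rk u p q) → bruhatLE u w := by
  intro m
  induction m using Nat.strong_induction_on with
  | _ m ih =>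
    intro u w hm hdom
    by_cases huw : u = w
    · rw [huw]; exact Relation.ReflTransGen.refl
    · obtain ⟨t, hsw, hdom', hlen, hM⟩ := step_lemma u w hdom huw
      exact Relation.ReflTransGen.head ⟨t, hsw, rfl, hlen⟩
        (ih (M (u * t)) (by omega) (u * t) w le_rfl hdom')



lemma corner_of_witness (w : Perm (Fin N)) (P Q : ℕ) (hP : P ≤ N) (a : Fin N)
    (ha : (a : ℕ) < P) (haQ : Q ≤ (w a : ℕ)) : rk w P Q ≤ P - 1 := by
  have hsub : (Finset.univ.filter fun k : Fin N => (k : ℕ) < P ∧ ((w k : ℕ)) < Q)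
      ⊆ (Finset.univ.filter fun k : Fin N => (k : ℕ) < P).erase a := by
    intro k hk
    rw [Finset.mem_filter] at hk
    rw [Finset.mem_erase, Finset.mem_filter]
    refine ⟨?_, Finset.mem_univ _, hk.2.1⟩
    intro hka
    rw [hka] at hk
    omega
  have hmem : a ∈ Finset.univ.filter (fun k : Fin N => (k : ℕ) < P) :=
    Finset.mem_filter.mpr ⟨Finset.mem_univ _, ha⟩
  calc rk w P Q ≤ _ := Finset.card_le_card hsub
    _ = P - 1 := by
        rw [Finset.card_erase_of_mem hmem, card_val_lt (N := N) P hP]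

lemma witness_of_corner (w : Perm (Fin N)) (P Q : ℕ) (hP : P ≤ N) (h1 : 1 ≤ P)
    (h : rk w P Q ≤ P - 1) : ∃ a : Fin N, (a : ℕ) < P ∧ Q ≤ (w a : ℕ) := by
  by_contra hc
  push_neg at hc
  have hc2 : (Finset.univ.filter fun k : Fin N => (k : ℕ) < P).card = P :=
    card_val_lt P hP
  have heq : rk w P Q = (Finset.univ.filter fun k : Fin N => (k : ℕ) < P).card := by
    unfold rk
    congr 1
    ext k
    simp only [Finset.mem_filter, Finset.mem_univ, true_and]
    exact ⟨fun h' => h'.1, fun h' => ⟨h', hc k h'⟩⟩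
  omega

lemma mirror (w : Perm (Fin N)) (hw : theta w = w⁻¹) (a : Fin N) :
    w ((w a).rev) = a.rev := by
  have h1 : ∀ x : Fin N, (w (x.rev)).rev = w⁻¹ x := by
    intro x
    have h := congrArg (fun σ : Perm (Fin N) => σ x) hw
    simpa [theta, w0, Equiv.Perm.mul_apply, Fin.revPerm_apply] using h
  have h2 := h1 (w a)
  rw [Equiv.Perm.inv_def, Equiv.symm_apply_apply] at h2
  have h3 := congrArg Fin.rev h2
  rwa [Fin.rev_rev] at h3

lemma gen_eq_swap' (Nn j a b : ℕ) (ha : a < Nn) (hb : b < Nn)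
    (h1 : j - 1 = a) (h2 : j = b) (h0 : 0 < j) :
    gen Nn j = Equiv.swap ⟨a, ha⟩ ⟨b, hb⟩ := by
  unfold gen
  rw [dif_pos ⟨h0, h2 ▸ hb⟩]
  congr 1 <;> (simp only [Fin.mk.injEq]; omega)

def tperm (n i : ℕ) : Perm (Fin (2*n)) :=
  gen (2*n) (2*n - (i-1)) * gen (2*n) (2*n - i) * gen (2*n) (2*n - (i+1)) *
    gen (2*n) (i+1) * gen (2*n) i * gen (2*n) (i-1)

section Tau

variable {n i : ℕ} (h2 : 2 ≤ i) (hi : i ≤ n - 2)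

lemma tau_val (h2 : 2 ≤ i) (hi : i ≤ n - 2) (k : Fin (2*n)) :
    ((tperm n i k : ℕ)) =
      if (k : ℕ) = i-2 then i+1 else if (k : ℕ) = i-1 then i-2
      else if (k : ℕ) = i then i-1 else if (k : ℕ) = i+1 then i
      else if (k : ℕ) = 2*n-i-2 then 2*n-i+1 else if (k : ℕ) = 2*n-i-1 then 2*n-i-2
      else if (k : ℕ) = 2*n-i then 2*n-i-1 else if (k : ℕ) = 2*n-i+1 then 2*n-i
      else (k : ℕ) := by
  have hn : 4 ≤ n := by omega
  have hB1 : i-2 < 2*n := by omega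
  have hB2 : i-1 < 2*n := by omega
  have hB3 : i < 2*n := by omega
  have hB4 : i+1 < 2*n := by omega
  have hB5 : 2*n-i-2 < 2*n := by omega
  have hB6 : 2*n-i-1 < 2*n := by omega
  have hB7 : 2*n-i < 2*n := by omega
  have hB8 : 2*n-i+1 < 2*n := by omega
  have e1 : gen (2*n) (2*n - (i-1)) = Equiv.swap (⟨2*n-i, hB7⟩ : Fin (2*n)) (⟨2*n-i+1, hB8⟩ : Fin (2*n)) :=
    gen_eq_swap' (2*n) (2*n - (i-1)) (2*n-i) (2*n-i+1) hB7 hB8 (by omega) (by omega) (by omega)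
  have e2 : gen (2*n) (2*n - i) = Equiv.swap (⟨2*n-i-1, hB6⟩ : Fin (2*n)) (⟨2*n-i, hB7⟩ : Fin (2*n)) :=
    gen_eq_swap' (2*n) (2*n - i) (2*n-i-1) (2*n-i) hB6 hB7 (by omega) (by omega) (by omega)
  have e3 : gen (2*n) (2*n - (i+1)) = Equiv.swap (⟨2*n-i-2, hB5⟩ : Fin (2*n)) (⟨2*n-i-1, hB6⟩ : Fin (2*n)) :=
    gen_eq_swap' (2*n) (2*n - (i+1)) (2*n-i-2) (2*n-i-1) hB5 hB6 (by omega) (by omega) (by omega)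
  have e4 : gen (2*n) (i+1) = Equiv.swap (⟨i, hB3⟩ : Fin (2*n)) (⟨i+1, hB4⟩ : Fin (2*n)) :=
    gen_eq_swap' (2*n) (i+1) (i) (i+1) hB3 hB4 (by omega) (by omega) (by omega)
  have e5 : gen (2*n) (i) = Equiv.swap (⟨i-1, hB2⟩ : Fin (2*n)) (⟨i, hB3⟩ : Fin (2*n)) :=
    gen_eq_swap' (2*n) (i) (i-1) (i) hB2 hB3 (by omega) (by omega) (by omega)
  have e6 : gen (2*n) (i-1) = Equiv.swap (⟨i-2, hB1⟩ : Fin (2*n)) (⟨i-1, hB2⟩ : Fin (2*n)) :=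
    gen_eq_swap' (2*n) (i-1) (i-2) (i-1) hB1 hB2 (by omega) (by omega) (by omega)
  have happ : tperm n i k = Equiv.swap (⟨2*n-i, hB7⟩ : Fin (2*n)) (⟨2*n-i+1, hB8⟩ : Fin (2*n)) (Equiv.swap (⟨2*n-i-1, hB6⟩ : Fin (2*n)) (⟨2*n-i, hB7⟩ : Fin (2*n)) (Equiv.swap (⟨2*n-i-2, hB5⟩ : Fin (2*n)) (⟨2*n-i-1, hB6⟩ : Fin (2*n)) (Equiv.swap (⟨i, hB3⟩ : Fin (2*n)) (⟨i+1, hB4⟩ : Fin (2*n)) (Equiv.swap (⟨i-1, hB2⟩ : Fin (2*n)) (⟨i, hB3⟩ : Fin (2*n)) (Equiv.swap (⟨i-2, hB1⟩ : Fin (2*n)) (⟨i-1, hB2⟩ : Fin (2*n)) (k)))))) := by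
    unfold tperm
    rw [e1, e2, e3, e4, e5, e6]
    simp only [Equiv.Perm.mul_apply]
  by_cases hk1 : (k : ℕ) = i-2
  · have hk : k = (⟨i-2, hB1⟩ : Fin (2*n)) := Fin.ext hk1
    have c1 : Equiv.swap (⟨i-2, hB1⟩ : Fin (2*n)) (⟨i-1, hB2⟩ : Fin (2*n)) (k) = (⟨i-1, hB2⟩ : Fin (2*n)) := by
      rw [hk]; exact Equiv.swap_apply_left _ _
    have c2 : Equiv.swap (⟨i-1, hB2⟩ : Fin (2*n)) (⟨i, hB3⟩ : Fin (2*n)) (Equiv.swap (⟨i-2, hB1⟩ : Fin (2*n)) (⟨i-1, hB2⟩ : Fin (2*n)) (k)) = (⟨i, hB3⟩ : Fin (2*n)) := by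
      rw [c1]; exact Equiv.swap_apply_left _ _
    have c3 : Equiv.swap (⟨i, hB3⟩ : Fin (2*n)) (⟨i+1, hB4⟩ : Fin (2*n)) (Equiv.swap (⟨i-1, hB2⟩ : Fin (2*n)) (⟨i, hB3⟩ : Fin (2*n)) (Equiv.swap (⟨i-2, hB1⟩ : Fin (2*n)) (⟨i-1, hB2⟩ : Fin (2*n)) (k))) = (⟨i+1, hB4⟩ : Fin (2*n)) := by
      rw [c2]; exact Equiv.swap_apply_left _ _
    have c4 : Equiv.swap (⟨2*n-i-2, hB5⟩ : Fin (2*n)) (⟨2*n-i-1, hB6⟩ : Fin (2*n)) (Equiv.swap (⟨i, hB3⟩ : Fin (2*n)) (⟨i+1, hB4⟩ : Fin (2*n)) (Equiv.swap (⟨i-1, hB2⟩ : Fin (2*n)) (⟨i, hB3⟩ : Fin (2*n)) (Equiv.swap (⟨i-2, hB1⟩ : Fin (2*n)) (⟨i-1, hB2⟩ : Fin (2*n)) (k)))) = (⟨i+1, hB4⟩ : Fin (2*n)) := by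
      rw [c3]; exact Equiv.swap_apply_of_ne_of_ne (Fin.ne_of_val_ne (show (i+1 : ℕ) ≠ 2*n-i-2 by omega)) (Fin.ne_of_val_ne (show (i+1 : ℕ) ≠ 2*n-i-1 by omega))
    have c5 : Equiv.swap (⟨2*n-i-1, hB6⟩ : Fin (2*n)) (⟨2*n-i, hB7⟩ : Fin (2*n)) (Equiv.swap (⟨2*n-i-2, hB5⟩ : Fin (2*n)) (⟨2*n-i-1, hB6⟩ : Fin (2*n)) (Equiv.swap (⟨i, hB3⟩ : Fin (2*n)) (⟨i+1, hB4⟩ : Fin (2*n)) (Equiv.swap (⟨i-1, hB2⟩ : Fin (2*n)) (⟨i, hB3⟩ : Fin (2*n)) (Equiv.swap (⟨i-2, hB1⟩ : Fin (2*n)) (⟨i-1, hB2⟩ : Fin (2*n)) (k))))) = (⟨i+1, hB4⟩ : Fin (2*n)) := by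
      rw [c4]; exact Equiv.swap_apply_of_ne_of_ne (Fin.ne_of_val_ne (show (i+1 : ℕ) ≠ 2*n-i-1 by omega)) (Fin.ne_of_val_ne (show (i+1 : ℕ) ≠ 2*n-i by omega))
    have c6 : Equiv.swap (⟨2*n-i, hB7⟩ : Fin (2*n)) (⟨2*n-i+1, hB8⟩ : Fin (2*n)) (Equiv.swap (⟨2*n-i-1, hB6⟩ : Fin (2*n)) (⟨2*n-i, hB7⟩ : Fin (2*n)) (Equiv.swap (⟨2*n-i-2, hB5⟩ : Fin (2*n)) (⟨2*n-i-1, hB6⟩ : Fin (2*n)) (Equiv.swap (⟨i, hB3⟩ : Fin (2*n)) (⟨i+1, hB4⟩ : Fin (2*n)) (Equiv.swap (⟨i-1, hB2⟩ : Fin (2*n)) (⟨i, hB3⟩ : Fin (2*n)) (Equiv.swap (⟨i-2, hB1⟩ : Fin (2*n)) (⟨i-1, hB2⟩ : Fin (2*n)) (k)))))) = (⟨i+1, hB4⟩ : Fin (2*n)) := by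
      rw [c5]; exact Equiv.swap_apply_of_ne_of_ne (Fin.ne_of_val_ne (show (i+1 : ℕ) ≠ 2*n-i by omega)) (Fin.ne_of_val_ne (show (i+1 : ℕ) ≠ 2*n-i+1 by omega))
    rw [happ, c6, if_pos hk1]
  by_cases hk2 : (k : ℕ) = i-1
  · have hk : k = (⟨i-1, hB2⟩ : Fin (2*n)) := Fin.ext hk2
    have c1 : Equiv.swap (⟨i-2, hB1⟩ : Fin (2*n)) (⟨i-1, hB2⟩ : Fin (2*n)) (k) = (⟨i-2, hB1⟩ : Fin (2*n)) := by
      rw [hk]; exact Equiv.swap_apply_right _ _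
    have c2 : Equiv.swap (⟨i-1, hB2⟩ : Fin (2*n)) (⟨i, hB3⟩ : Fin (2*n)) (Equiv.swap (⟨i-2, hB1⟩ : Fin (2*n)) (⟨i-1, hB2⟩ : Fin (2*n)) (k)) = (⟨i-2, hB1⟩ : Fin (2*n)) := by
      rw [c1]; exact Equiv.swap_apply_of_ne_of_ne (Fin.ne_of_val_ne (show (i-2 : ℕ) ≠ i-1 by omega)) (Fin.ne_of_val_ne (show (i-2 : ℕ) ≠ i by omega))
    have c3 : Equiv.swap (⟨i, hB3⟩ : Fin (2*n)) (⟨i+1, hB4⟩ : Fin (2*n)) (Equiv.swap (⟨i-1, hB2⟩ : Fin (2*n)) (⟨i, hB3⟩ : Fin (2*n)) (Equiv.swap (⟨i-2, hB1⟩ : Fin (2*n)) (⟨i-1, hB2⟩ : Fin (2*n)) (k))) = (⟨i-2, hB1⟩ : Fin (2*n)) := by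
      rw [c2]; exact Equiv.swap_apply_of_ne_of_ne (Fin.ne_of_val_ne (show (i-2 : ℕ) ≠ i by omega)) (Fin.ne_of_val_ne (show (i-2 : ℕ) ≠ i+1 by omega))
    have c4 : Equiv.swap (⟨2*n-i-2, hB5⟩ : Fin (2*n)) (⟨2*n-i-1, hB6⟩ : Fin (2*n)) (Equiv.swap (⟨i, hB3⟩ : Fin (2*n)) (⟨i+1, hB4⟩ : Fin (2*n)) (Equiv.swap (⟨i-1, hB2⟩ : Fin (2*n)) (⟨i, hB3⟩ : Fin (2*n)) (Equiv.swap (⟨i-2, hB1⟩ : Fin (2*n)) (⟨i-1, hB2⟩ : Fin (2*n)) (k)))) = (⟨i-2, hB1⟩ : Fin (2*n)) := by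
      rw [c3]; exact Equiv.swap_apply_of_ne_of_ne (Fin.ne_of_val_ne (show (i-2 : ℕ) ≠ 2*n-i-2 by omega)) (Fin.ne_of_val_ne (show (i-2 : ℕ) ≠ 2*n-i-1 by omega))
    have c5 : Equiv.swap (⟨2*n-i-1, hB6⟩ : Fin (2*n)) (⟨2*n-i, hB7⟩ : Fin (2*n)) (Equiv.swap (⟨2*n-i-2, hB5⟩ : Fin (2*n)) (⟨2*n-i-1, hB6⟩ : Fin (2*n)) (Equiv.swap (⟨i, hB3⟩ : Fin (2*n)) (⟨i+1, hB4⟩ : Fin (2*n)) (Equiv.swap (⟨i-1, hB2⟩ : Fin (2*n)) (⟨i, hB3⟩ : Fin (2*n)) (Equiv.swap (⟨i-2, hB1⟩ : Fin (2*n)) (⟨i-1, hB2⟩ : Fin (2*n)) (k))))) = (⟨i-2, hB1⟩ : Fin (2*n)) := by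
      rw [c4]; exact Equiv.swap_apply_of_ne_of_ne (Fin.ne_of_val_ne (show (i-2 : ℕ) ≠ 2*n-i-1 by omega)) (Fin.ne_of_val_ne (show (i-2 : ℕ) ≠ 2*n-i by omega))
    have c6 : Equiv.swap (⟨2*n-i, hB7⟩ : Fin (2*n)) (⟨2*n-i+1, hB8⟩ : Fin (2*n)) (Equiv.swap (⟨2*n-i-1, hB6⟩ : Fin (2*n)) (⟨2*n-i, hB7⟩ : Fin (2*n)) (Equiv.swap (⟨2*n-i-2, hB5⟩ : Fin (2*n)) (⟨2*n-i-1, hB6⟩ : Fin (2*n)) (Equiv.swap (⟨i, hB3⟩ : Fin (2*n)) (⟨i+1, hB4⟩ : Fin (2*n)) (Equiv.swap (⟨i-1, hB2⟩ : Fin (2*n)) (⟨i, hB3⟩ : Fin (2*n)) (Equiv.swap (⟨i-2, hB1⟩ : Fin (2*n)) (⟨i-1, hB2⟩ : Fin (2*n)) (k)))))) = (⟨i-2, hB1⟩ : Fin (2*n)) := by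
      rw [c5]; exact Equiv.swap_apply_of_ne_of_ne (Fin.ne_of_val_ne (show (i-2 : ℕ) ≠ 2*n-i by omega)) (Fin.ne_of_val_ne (show (i-2 : ℕ) ≠ 2*n-i+1 by omega))
    rw [happ, c6, if_neg hk1, if_pos hk2]
  by_cases hk3 : (k : ℕ) = i
  · have hk : k = (⟨i, hB3⟩ : Fin (2*n)) := Fin.ext hk3
    have c1 : Equiv.swap (⟨i-2, hB1⟩ : Fin (2*n)) (⟨i-1, hB2⟩ : Fin (2*n)) (k) = (⟨i, hB3⟩ : Fin (2*n)) := by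
      rw [hk]; exact Equiv.swap_apply_of_ne_of_ne (Fin.ne_of_val_ne (show (i : ℕ) ≠ i-2 by omega)) (Fin.ne_of_val_ne (show (i : ℕ) ≠ i-1 by omega))
    have c2 : Equiv.swap (⟨i-1, hB2⟩ : Fin (2*n)) (⟨i, hB3⟩ : Fin (2*n)) (Equiv.swap (⟨i-2, hB1⟩ : Fin (2*n)) (⟨i-1, hB2⟩ : Fin (2*n)) (k)) = (⟨i-1, hB2⟩ : Fin (2*n)) := by
      rw [c1]; exact Equiv.swap_apply_right _ _
    have c3 : Equiv.swap (⟨i, hB3⟩ : Fin (2*n)) (⟨i+1, hB4⟩ : Fin (2*n)) (Equiv.swap (⟨i-1, hB2⟩ : Fin (2*n)) (⟨i, hB3⟩ : Fin (2*n)) (Equiv.swap (⟨i-2, hB1⟩ : Fin (2*n)) (⟨i-1, hB2⟩ : Fin (2*n)) (k))) = (⟨i-1, hB2⟩ : Fin (2*n)) := by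
      rw [c2]; exact Equiv.swap_apply_of_ne_of_ne (Fin.ne_of_val_ne (show (i-1 : ℕ) ≠ i by omega)) (Fin.ne_of_val_ne (show (i-1 : ℕ) ≠ i+1 by omega))
    have c4 : Equiv.swap (⟨2*n-i-2, hB5⟩ : Fin (2*n)) (⟨2*n-i-1, hB6⟩ : Fin (2*n)) (Equiv.swap (⟨i, hB3⟩ : Fin (2*n)) (⟨i+1, hB4⟩ : Fin (2*n)) (Equiv.swap (⟨i-1, hB2⟩ : Fin (2*n)) (⟨i, hB3⟩ : Fin (2*n)) (Equiv.swap (⟨i-2, hB1⟩ : Fin (2*n)) (⟨i-1, hB2⟩ : Fin (2*n)) (k)))) = (⟨i-1, hB2⟩ : Fin (2*n)) := by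
      rw [c3]; exact Equiv.swap_apply_of_ne_of_ne (Fin.ne_of_val_ne (show (i-1 : ℕ) ≠ 2*n-i-2 by omega)) (Fin.ne_of_val_ne (show (i-1 : ℕ) ≠ 2*n-i-1 by omega))
    have c5 : Equiv.swap (⟨2*n-i-1, hB6⟩ : Fin (2*n)) (⟨2*n-i, hB7⟩ : Fin (2*n)) (Equiv.swap (⟨2*n-i-2, hB5⟩ : Fin (2*n)) (⟨2*n-i-1, hB6⟩ : Fin (2*n)) (Equiv.swap (⟨i, hB3⟩ : Fin (2*n)) (⟨i+1, hB4⟩ : Fin (2*n)) (Equiv.swap (⟨i-1, hB2⟩ : Fin (2*n)) (⟨i, hB3⟩ : Fin (2*n)) (Equiv.swap (⟨i-2, hB1⟩ : Fin (2*n)) (⟨i-1, hB2⟩ : Fin (2*n)) (k))))) = (⟨i-1, hB2⟩ : Fin (2*n)) := by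
      rw [c4]; exact Equiv.swap_apply_of_ne_of_ne (Fin.ne_of_val_ne (show (i-1 : ℕ) ≠ 2*n-i-1 by omega)) (Fin.ne_of_val_ne (show (i-1 : ℕ) ≠ 2*n-i by omega))
    have c6 : Equiv.swap (⟨2*n-i, hB7⟩ : Fin (2*n)) (⟨2*n-i+1, hB8⟩ : Fin (2*n)) (Equiv.swap (⟨2*n-i-1, hB6⟩ : Fin (2*n)) (⟨2*n-i, hB7⟩ : Fin (2*n)) (Equiv.swap (⟨2*n-i-2, hB5⟩ : Fin (2*n)) (⟨2*n-i-1, hB6⟩ : Fin (2*n)) (Equiv.swap (⟨i, hB3⟩ : Fin (2*n)) (⟨i+1, hB4⟩ : Fin (2*n)) (Equiv.swap (⟨i-1, hB2⟩ : Fin (2*n)) (⟨i, hB3⟩ : Fin (2*n)) (Equiv.swap (⟨i-2, hB1⟩ : Fin (2*n)) (⟨i-1, hB2⟩ : Fin (2*n)) (k)))))) = (⟨i-1, hB2⟩ : Fin (2*n)) := by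
      rw [c5]; exact Equiv.swap_apply_of_ne_of_ne (Fin.ne_of_val_ne (show (i-1 : ℕ) ≠ 2*n-i by omega)) (Fin.ne_of_val_ne (show (i-1 : ℕ) ≠ 2*n-i+1 by omega))
    rw [happ, c6, if_neg hk1, if_neg hk2, if_pos hk3]
  by_cases hk4 : (k : ℕ) = i+1
  · have hk : k = (⟨i+1, hB4⟩ : Fin (2*n)) := Fin.ext hk4
    have c1 : Equiv.swap (⟨i-2, hB1⟩ : Fin (2*n)) (⟨i-1, hB2⟩ : Fin (2*n)) (k) = (⟨i+1, hB4⟩ : Fin (2*n)) := by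
      rw [hk]; exact Equiv.swap_apply_of_ne_of_ne (Fin.ne_of_val_ne (show (i+1 : ℕ) ≠ i-2 by omega)) (Fin.ne_of_val_ne (show (i+1 : ℕ) ≠ i-1 by omega))
    have c2 : Equiv.swap (⟨i-1, hB2⟩ : Fin (2*n)) (⟨i, hB3⟩ : Fin (2*n)) (Equiv.swap (⟨i-2, hB1⟩ : Fin (2*n)) (⟨i-1, hB2⟩ : Fin (2*n)) (k)) = (⟨i+1, hB4⟩ : Fin (2*n)) := by
      rw [c1]; exact Equiv.swap_apply_of_ne_of_ne (Fin.ne_of_val_ne (show (i+1 : ℕ) ≠ i-1 by omega)) (Fin.ne_of_val_ne (show (i+1 : ℕ) ≠ i by omega))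
    have c3 : Equiv.swap (⟨i, hB3⟩ : Fin (2*n)) (⟨i+1, hB4⟩ : Fin (2*n)) (Equiv.swap (⟨i-1, hB2⟩ : Fin (2*n)) (⟨i, hB3⟩ : Fin (2*n)) (Equiv.swap (⟨i-2, hB1⟩ : Fin (2*n)) (⟨i-1, hB2⟩ : Fin (2*n)) (k))) = (⟨i, hB3⟩ : Fin (2*n)) := by
      rw [c2]; exact Equiv.swap_apply_right _ _
    have c4 : Equiv.swap (⟨2*n-i-2, hB5⟩ : Fin (2*n)) (⟨2*n-i-1, hB6⟩ : Fin (2*n)) (Equiv.swap (⟨i, hB3⟩ : Fin (2*n)) (⟨i+1, hB4⟩ : Fin (2*n)) (Equiv.swap (⟨i-1, hB2⟩ : Fin (2*n)) (⟨i, hB3⟩ : Fin (2*n)) (Equiv.swap (⟨i-2, hB1⟩ : Fin (2*n)) (⟨i-1, hB2⟩ : Fin (2*n)) (k)))) = (⟨i, hB3⟩ : Fin (2*n)) := by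
      rw [c3]; exact Equiv.swap_apply_of_ne_of_ne (Fin.ne_of_val_ne (show (i : ℕ) ≠ 2*n-i-2 by omega)) (Fin.ne_of_val_ne (show (i : ℕ) ≠ 2*n-i-1 by omega))
    have c5 : Equiv.swap (⟨2*n-i-1, hB6⟩ : Fin (2*n)) (⟨2*n-i, hB7⟩ : Fin (2*n)) (Equiv.swap (⟨2*n-i-2, hB5⟩ : Fin (2*n)) (⟨2*n-i-1, hB6⟩ : Fin (2*n)) (Equiv.swap (⟨i, hB3⟩ : Fin (2*n)) (⟨i+1, hB4⟩ : Fin (2*n)) (Equiv.swap (⟨i-1, hB2⟩ : Fin (2*n)) (⟨i, hB3⟩ : Fin (2*n)) (Equiv.swap (⟨i-2, hB1⟩ : Fin (2*n)) (⟨i-1, hB2⟩ : Fin (2*n)) (k))))) = (⟨i, hB3⟩ : Fin (2*n)) := by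
      rw [c4]; exact Equiv.swap_apply_of_ne_of_ne (Fin.ne_of_val_ne (show (i : ℕ) ≠ 2*n-i-1 by omega)) (Fin.ne_of_val_ne (show (i : ℕ) ≠ 2*n-i by omega))
    have c6 : Equiv.swap (⟨2*n-i, hB7⟩ : Fin (2*n)) (⟨2*n-i+1, hB8⟩ : Fin (2*n)) (Equiv.swap (⟨2*n-i-1, hB6⟩ : Fin (2*n)) (⟨2*n-i, hB7⟩ : Fin (2*n)) (Equiv.swap (⟨2*n-i-2, hB5⟩ : Fin (2*n)) (⟨2*n-i-1, hB6⟩ : Fin (2*n)) (Equiv.swap (⟨i, hB3⟩ : Fin (2*n)) (⟨i+1, hB4⟩ : Fin (2*n)) (Equiv.swap (⟨i-1, hB2⟩ : Fin (2*n)) (⟨i, hB3⟩ : Fin (2*n)) (Equiv.swap (⟨i-2, hB1⟩ : Fin (2*n)) (⟨i-1, hB2⟩ : Fin (2*n)) (k)))))) = (⟨i, hB3⟩ : Fin (2*n)) := by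
      rw [c5]; exact Equiv.swap_apply_of_ne_of_ne (Fin.ne_of_val_ne (show (i : ℕ) ≠ 2*n-i by omega)) (Fin.ne_of_val_ne (show (i : ℕ) ≠ 2*n-i+1 by omega))
    rw [happ, c6, if_neg hk1, if_neg hk2, if_neg hk3, if_pos hk4]
  by_cases hk5 : (k : ℕ) = 2*n-i-2
  · have hk : k = (⟨2*n-i-2, hB5⟩ : Fin (2*n)) := Fin.ext hk5
    have c1 : Equiv.swap (⟨i-2, hB1⟩ : Fin (2*n)) (⟨i-1, hB2⟩ : Fin (2*n)) (k) = (⟨2*n-i-2, hB5⟩ : Fin (2*n)) := by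
      rw [hk]; exact Equiv.swap_apply_of_ne_of_ne (Fin.ne_of_val_ne (show (2*n-i-2 : ℕ) ≠ i-2 by omega)) (Fin.ne_of_val_ne (show (2*n-i-2 : ℕ) ≠ i-1 by omega))
    have c2 : Equiv.swap (⟨i-1, hB2⟩ : Fin (2*n)) (⟨i, hB3⟩ : Fin (2*n)) (Equiv.swap (⟨i-2, hB1⟩ : Fin (2*n)) (⟨i-1, hB2⟩ : Fin (2*n)) (k)) = (⟨2*n-i-2, hB5⟩ : Fin (2*n)) := by
      rw [c1]; exact Equiv.swap_apply_of_ne_of_ne (Fin.ne_of_val_ne (show (2*n-i-2 : ℕ) ≠ i-1 by omega)) (Fin.ne_of_val_ne (show (2*n-i-2 : ℕ) ≠ i by omega))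
    have c3 : Equiv.swap (⟨i, hB3⟩ : Fin (2*n)) (⟨i+1, hB4⟩ : Fin (2*n)) (Equiv.swap (⟨i-1, hB2⟩ : Fin (2*n)) (⟨i, hB3⟩ : Fin (2*n)) (Equiv.swap (⟨i-2, hB1⟩ : Fin (2*n)) (⟨i-1, hB2⟩ : Fin (2*n)) (k))) = (⟨2*n-i-2, hB5⟩ : Fin (2*n)) := by
      rw [c2]; exact Equiv.swap_apply_of_ne_of_ne (Fin.ne_of_val_ne (show (2*n-i-2 : ℕ) ≠ i by omega)) (Fin.ne_of_val_ne (show (2*n-i-2 : ℕ) ≠ i+1 by omega))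
    have c4 : Equiv.swap (⟨2*n-i-2, hB5⟩ : Fin (2*n)) (⟨2*n-i-1, hB6⟩ : Fin (2*n)) (Equiv.swap (⟨i, hB3⟩ : Fin (2*n)) (⟨i+1, hB4⟩ : Fin (2*n)) (Equiv.swap (⟨i-1, hB2⟩ : Fin (2*n)) (⟨i, hB3⟩ : Fin (2*n)) (Equiv.swap (⟨i-2, hB1⟩ : Fin (2*n)) (⟨i-1, hB2⟩ : Fin (2*n)) (k)))) = (⟨2*n-i-1, hB6⟩ : Fin (2*n)) := by
      rw [c3]; exact Equiv.swap_apply_left _ _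
    have c5 : Equiv.swap (⟨2*n-i-1, hB6⟩ : Fin (2*n)) (⟨2*n-i, hB7⟩ : Fin (2*n)) (Equiv.swap (⟨2*n-i-2, hB5⟩ : Fin (2*n)) (⟨2*n-i-1, hB6⟩ : Fin (2*n)) (Equiv.swap (⟨i, hB3⟩ : Fin (2*n)) (⟨i+1, hB4⟩ : Fin (2*n)) (Equiv.swap (⟨i-1, hB2⟩ : Fin (2*n)) (⟨i, hB3⟩ : Fin (2*n)) (Equiv.swap (⟨i-2, hB1⟩ : Fin (2*n)) (⟨i-1, hB2⟩ : Fin (2*n)) (k))))) = (⟨2*n-i, hB7⟩ : Fin (2*n)) := by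
      rw [c4]; exact Equiv.swap_apply_left _ _
    have c6 : Equiv.swap (⟨2*n-i, hB7⟩ : Fin (2*n)) (⟨2*n-i+1, hB8⟩ : Fin (2*n)) (Equiv.swap (⟨2*n-i-1, hB6⟩ : Fin (2*n)) (⟨2*n-i, hB7⟩ : Fin (2*n)) (Equiv.swap (⟨2*n-i-2, hB5⟩ : Fin (2*n)) (⟨2*n-i-1, hB6⟩ : Fin (2*n)) (Equiv.swap (⟨i, hB3⟩ : Fin (2*n)) (⟨i+1, hB4⟩ : Fin (2*n)) (Equiv.swap (⟨i-1, hB2⟩ : Fin (2*n)) (⟨i, hB3⟩ : Fin (2*n)) (Equiv.swap (⟨i-2, hB1⟩ : Fin (2*n)) (⟨i-1, hB2⟩ : Fin (2*n)) (k)))))) = (⟨2*n-i+1, hB8⟩ : Fin (2*n)) := by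
      rw [c5]; exact Equiv.swap_apply_left _ _
    rw [happ, c6, if_neg hk1, if_neg hk2, if_neg hk3, if_neg hk4, if_pos hk5]
  by_cases hk6 : (k : ℕ) = 2*n-i-1
  · have hk : k = (⟨2*n-i-1, hB6⟩ : Fin (2*n)) := Fin.ext hk6
    have c1 : Equiv.swap (⟨i-2, hB1⟩ : Fin (2*n)) (⟨i-1, hB2⟩ : Fin (2*n)) (k) = (⟨2*n-i-1, hB6⟩ : Fin (2*n)) := by
      rw [hk]; exact Equiv.swap_apply_of_ne_of_ne (Fin.ne_of_val_ne (show (2*n-i-1 : ℕ) ≠ i-2 by omega)) (Fin.ne_of_val_ne (show (2*n-i-1 : ℕ) ≠ i-1 by omega))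
    have c2 : Equiv.swap (⟨i-1, hB2⟩ : Fin (2*n)) (⟨i, hB3⟩ : Fin (2*n)) (Equiv.swap (⟨i-2, hB1⟩ : Fin (2*n)) (⟨i-1, hB2⟩ : Fin (2*n)) (k)) = (⟨2*n-i-1, hB6⟩ : Fin (2*n)) := by
      rw [c1]; exact Equiv.swap_apply_of_ne_of_ne (Fin.ne_of_val_ne (show (2*n-i-1 : ℕ) ≠ i-1 by omega)) (Fin.ne_of_val_ne (show (2*n-i-1 : ℕ) ≠ i by omega))
    have c3 : Equiv.swap (⟨i, hB3⟩ : Fin (2*n)) (⟨i+1, hB4⟩ : Fin (2*n)) (Equiv.swap (⟨i-1, hB2⟩ : Fin (2*n)) (⟨i, hB3⟩ : Fin (2*n)) (Equiv.swap (⟨i-2, hB1⟩ : Fin (2*n)) (⟨i-1, hB2⟩ : Fin (2*n)) (k))) = (⟨2*n-i-1, hB6⟩ : Fin (2*n)) := by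
      rw [c2]; exact Equiv.swap_apply_of_ne_of_ne (Fin.ne_of_val_ne (show (2*n-i-1 : ℕ) ≠ i by omega)) (Fin.ne_of_val_ne (show (2*n-i-1 : ℕ) ≠ i+1 by omega))
    have c4 : Equiv.swap (⟨2*n-i-2, hB5⟩ : Fin (2*n)) (⟨2*n-i-1, hB6⟩ : Fin (2*n)) (Equiv.swap (⟨i, hB3⟩ : Fin (2*n)) (⟨i+1, hB4⟩ : Fin (2*n)) (Equiv.swap (⟨i-1, hB2⟩ : Fin (2*n)) (⟨i, hB3⟩ : Fin (2*n)) (Equiv.swap (⟨i-2, hB1⟩ : Fin (2*n)) (⟨i-1, hB2⟩ : Fin (2*n)) (k)))) = (⟨2*n-i-2, hB5⟩ : Fin (2*n)) := by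
      rw [c3]; exact Equiv.swap_apply_right _ _
    have c5 : Equiv.swap (⟨2*n-i-1, hB6⟩ : Fin (2*n)) (⟨2*n-i, hB7⟩ : Fin (2*n)) (Equiv.swap (⟨2*n-i-2, hB5⟩ : Fin (2*n)) (⟨2*n-i-1, hB6⟩ : Fin (2*n)) (Equiv.swap (⟨i, hB3⟩ : Fin (2*n)) (⟨i+1, hB4⟩ : Fin (2*n)) (Equiv.swap (⟨i-1, hB2⟩ : Fin (2*n)) (⟨i, hB3⟩ : Fin (2*n)) (Equiv.swap (⟨i-2, hB1⟩ : Fin (2*n)) (⟨i-1, hB2⟩ : Fin (2*n)) (k))))) = (⟨2*n-i-2, hB5⟩ : Fin (2*n)) := by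
      rw [c4]; exact Equiv.swap_apply_of_ne_of_ne (Fin.ne_of_val_ne (show (2*n-i-2 : ℕ) ≠ 2*n-i-1 by omega)) (Fin.ne_of_val_ne (show (2*n-i-2 : ℕ) ≠ 2*n-i by omega))
    have c6 : Equiv.swap (⟨2*n-i, hB7⟩ : Fin (2*n)) (⟨2*n-i+1, hB8⟩ : Fin (2*n)) (Equiv.swap (⟨2*n-i-1, hB6⟩ : Fin (2*n)) (⟨2*n-i, hB7⟩ : Fin (2*n)) (Equiv.swap (⟨2*n-i-2, hB5⟩ : Fin (2*n)) (⟨2*n-i-1, hB6⟩ : Fin (2*n)) (Equiv.swap (⟨i, hB3⟩ : Fin (2*n)) (⟨i+1, hB4⟩ : Fin (2*n)) (Equiv.swap (⟨i-1, hB2⟩ : Fin (2*n)) (⟨i, hB3⟩ : Fin (2*n)) (Equiv.swap (⟨i-2, hB1⟩ : Fin (2*n)) (⟨i-1, hB2⟩ : Fin (2*n)) (k)))))) = (⟨2*n-i-2, hB5⟩ : Fin (2*n)) := by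
      rw [c5]; exact Equiv.swap_apply_of_ne_of_ne (Fin.ne_of_val_ne (show (2*n-i-2 : ℕ) ≠ 2*n-i by omega)) (Fin.ne_of_val_ne (show (2*n-i-2 : ℕ) ≠ 2*n-i+1 by omega))
    rw [happ, c6, if_neg hk1, if_neg hk2, if_neg hk3, if_neg hk4, if_neg hk5, if_pos hk6]
  by_cases hk7 : (k : ℕ) = 2*n-i
  · have hk : k = (⟨2*n-i, hB7⟩ : Fin (2*n)) := Fin.ext hk7
    have c1 : Equiv.swap (⟨i-2, hB1⟩ : Fin (2*n)) (⟨i-1, hB2⟩ : Fin (2*n)) (k) = (⟨2*n-i, hB7⟩ : Fin (2*n)) := by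
      rw [hk]; exact Equiv.swap_apply_of_ne_of_ne (Fin.ne_of_val_ne (show (2*n-i : ℕ) ≠ i-2 by omega)) (Fin.ne_of_val_ne (show (2*n-i : ℕ) ≠ i-1 by omega))
    have c2 : Equiv.swap (⟨i-1, hB2⟩ : Fin (2*n)) (⟨i, hB3⟩ : Fin (2*n)) (Equiv.swap (⟨i-2, hB1⟩ : Fin (2*n)) (⟨i-1, hB2⟩ : Fin (2*n)) (k)) = (⟨2*n-i, hB7⟩ : Fin (2*n)) := by
      rw [c1]; exact Equiv.swap_apply_of_ne_of_ne (Fin.ne_of_val_ne (show (2*n-i : ℕ) ≠ i-1 by omega)) (Fin.ne_of_val_ne (show (2*n-i : ℕ) ≠ i by omega))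
    have c3 : Equiv.swap (⟨i, hB3⟩ : Fin (2*n)) (⟨i+1, hB4⟩ : Fin (2*n)) (Equiv.swap (⟨i-1, hB2⟩ : Fin (2*n)) (⟨i, hB3⟩ : Fin (2*n)) (Equiv.swap (⟨i-2, hB1⟩ : Fin (2*n)) (⟨i-1, hB2⟩ : Fin (2*n)) (k))) = (⟨2*n-i, hB7⟩ : Fin (2*n)) := by
      rw [c2]; exact Equiv.swap_apply_of_ne_of_ne (Fin.ne_of_val_ne (show (2*n-i : ℕ) ≠ i by omega)) (Fin.ne_of_val_ne (show (2*n-i : ℕ) ≠ i+1 by omega))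
    have c4 : Equiv.swap (⟨2*n-i-2, hB5⟩ : Fin (2*n)) (⟨2*n-i-1, hB6⟩ : Fin (2*n)) (Equiv.swap (⟨i, hB3⟩ : Fin (2*n)) (⟨i+1, hB4⟩ : Fin (2*n)) (Equiv.swap (⟨i-1, hB2⟩ : Fin (2*n)) (⟨i, hB3⟩ : Fin (2*n)) (Equiv.swap (⟨i-2, hB1⟩ : Fin (2*n)) (⟨i-1, hB2⟩ : Fin (2*n)) (k)))) = (⟨2*n-i, hB7⟩ : Fin (2*n)) := by
      rw [c3]; exact Equiv.swap_apply_of_ne_of_ne (Fin.ne_of_val_ne (show (2*n-i : ℕ) ≠ 2*n-i-2 by omega)) (Fin.ne_of_val_ne (show (2*n-i : ℕ) ≠ 2*n-i-1 by omega))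
    have c5 : Equiv.swap (⟨2*n-i-1, hB6⟩ : Fin (2*n)) (⟨2*n-i, hB7⟩ : Fin (2*n)) (Equiv.swap (⟨2*n-i-2, hB5⟩ : Fin (2*n)) (⟨2*n-i-1, hB6⟩ : Fin (2*n)) (Equiv.swap (⟨i, hB3⟩ : Fin (2*n)) (⟨i+1, hB4⟩ : Fin (2*n)) (Equiv.swap (⟨i-1, hB2⟩ : Fin (2*n)) (⟨i, hB3⟩ : Fin (2*n)) (Equiv.swap (⟨i-2, hB1⟩ : Fin (2*n)) (⟨i-1, hB2⟩ : Fin (2*n)) (k))))) = (⟨2*n-i-1, hB6⟩ : Fin (2*n)) := by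
      rw [c4]; exact Equiv.swap_apply_right _ _
    have c6 : Equiv.swap (⟨2*n-i, hB7⟩ : Fin (2*n)) (⟨2*n-i+1, hB8⟩ : Fin (2*n)) (Equiv.swap (⟨2*n-i-1, hB6⟩ : Fin (2*n)) (⟨2*n-i, hB7⟩ : Fin (2*n)) (Equiv.swap (⟨2*n-i-2, hB5⟩ : Fin (2*n)) (⟨2*n-i-1, hB6⟩ : Fin (2*n)) (Equiv.swap (⟨i, hB3⟩ : Fin (2*n)) (⟨i+1, hB4⟩ : Fin (2*n)) (Equiv.swap (⟨i-1, hB2⟩ : Fin (2*n)) (⟨i, hB3⟩ : Fin (2*n)) (Equiv.swap (⟨i-2, hB1⟩ : Fin (2*n)) (⟨i-1, hB2⟩ : Fin (2*n)) (k)))))) = (⟨2*n-i-1, hB6⟩ : Fin (2*n)) := by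
      rw [c5]; exact Equiv.swap_apply_of_ne_of_ne (Fin.ne_of_val_ne (show (2*n-i-1 : ℕ) ≠ 2*n-i by omega)) (Fin.ne_of_val_ne (show (2*n-i-1 : ℕ) ≠ 2*n-i+1 by omega))
    rw [happ, c6, if_neg hk1, if_neg hk2, if_neg hk3, if_neg hk4, if_neg hk5, if_neg hk6, if_pos hk7]
  by_cases hk8 : (k : ℕ) = 2*n-i+1
  · have hk : k = (⟨2*n-i+1, hB8⟩ : Fin (2*n)) := Fin.ext hk8
    have c1 : Equiv.swap (⟨i-2, hB1⟩ : Fin (2*n)) (⟨i-1, hB2⟩ : Fin (2*n)) (k) = (⟨2*n-i+1, hB8⟩ : Fin (2*n)) := by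
      rw [hk]; exact Equiv.swap_apply_of_ne_of_ne (Fin.ne_of_val_ne (show (2*n-i+1 : ℕ) ≠ i-2 by omega)) (Fin.ne_of_val_ne (show (2*n-i+1 : ℕ) ≠ i-1 by omega))
    have c2 : Equiv.swap (⟨i-1, hB2⟩ : Fin (2*n)) (⟨i, hB3⟩ : Fin (2*n)) (Equiv.swap (⟨i-2, hB1⟩ : Fin (2*n)) (⟨i-1, hB2⟩ : Fin (2*n)) (k)) = (⟨2*n-i+1, hB8⟩ : Fin (2*n)) := by
      rw [c1]; exact Equiv.swap_apply_of_ne_of_ne (Fin.ne_of_val_ne (show (2*n-i+1 : ℕ) ≠ i-1 by omega)) (Fin.ne_of_val_ne (show (2*n-i+1 : ℕ) ≠ i by omega))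
    have c3 : Equiv.swap (⟨i, hB3⟩ : Fin (2*n)) (⟨i+1, hB4⟩ : Fin (2*n)) (Equiv.swap (⟨i-1, hB2⟩ : Fin (2*n)) (⟨i, hB3⟩ : Fin (2*n)) (Equiv.swap (⟨i-2, hB1⟩ : Fin (2*n)) (⟨i-1, hB2⟩ : Fin (2*n)) (k))) = (⟨2*n-i+1, hB8⟩ : Fin (2*n)) := by
      rw [c2]; exact Equiv.swap_apply_of_ne_of_ne (Fin.ne_of_val_ne (show (2*n-i+1 : ℕ) ≠ i by omega)) (Fin.ne_of_val_ne (show (2*n-i+1 : ℕ) ≠ i+1 by omega))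
    have c4 : Equiv.swap (⟨2*n-i-2, hB5⟩ : Fin (2*n)) (⟨2*n-i-1, hB6⟩ : Fin (2*n)) (Equiv.swap (⟨i, hB3⟩ : Fin (2*n)) (⟨i+1, hB4⟩ : Fin (2*n)) (Equiv.swap (⟨i-1, hB2⟩ : Fin (2*n)) (⟨i, hB3⟩ : Fin (2*n)) (Equiv.swap (⟨i-2, hB1⟩ : Fin (2*n)) (⟨i-1, hB2⟩ : Fin (2*n)) (k)))) = (⟨2*n-i+1, hB8⟩ : Fin (2*n)) := by
      rw [c3]; exact Equiv.swap_apply_of_ne_of_ne (Fin.ne_of_val_ne (show (2*n-i+1 : ℕ) ≠ 2*n-i-2 by omega)) (Fin.ne_of_val_ne (show (2*n-i+1 : ℕ) ≠ 2*n-i-1 by omega))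
    have c5 : Equiv.swap (⟨2*n-i-1, hB6⟩ : Fin (2*n)) (⟨2*n-i, hB7⟩ : Fin (2*n)) (Equiv.swap (⟨2*n-i-2, hB5⟩ : Fin (2*n)) (⟨2*n-i-1, hB6⟩ : Fin (2*n)) (Equiv.swap (⟨i, hB3⟩ : Fin (2*n)) (⟨i+1, hB4⟩ : Fin (2*n)) (Equiv.swap (⟨i-1, hB2⟩ : Fin (2*n)) (⟨i, hB3⟩ : Fin (2*n)) (Equiv.swap (⟨i-2, hB1⟩ : Fin (2*n)) (⟨i-1, hB2⟩ : Fin (2*n)) (k))))) = (⟨2*n-i+1, hB8⟩ : Fin (2*n)) := by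
      rw [c4]; exact Equiv.swap_apply_of_ne_of_ne (Fin.ne_of_val_ne (show (2*n-i+1 : ℕ) ≠ 2*n-i-1 by omega)) (Fin.ne_of_val_ne (show (2*n-i+1 : ℕ) ≠ 2*n-i by omega))
    have c6 : Equiv.swap (⟨2*n-i, hB7⟩ : Fin (2*n)) (⟨2*n-i+1, hB8⟩ : Fin (2*n)) (Equiv.swap (⟨2*n-i-1, hB6⟩ : Fin (2*n)) (⟨2*n-i, hB7⟩ : Fin (2*n)) (Equiv.swap (⟨2*n-i-2, hB5⟩ : Fin (2*n)) (⟨2*n-i-1, hB6⟩ : Fin (2*n)) (Equiv.swap (⟨i, hB3⟩ : Fin (2*n)) (⟨i+1, hB4⟩ : Fin (2*n)) (Equiv.swap (⟨i-1, hB2⟩ : Fin (2*n)) (⟨i, hB3⟩ : Fin (2*n)) (Equiv.swap (⟨i-2, hB1⟩ : Fin (2*n)) (⟨i-1, hB2⟩ : Fin (2*n)) (k)))))) = (⟨2*n-i, hB7⟩ : Fin (2*n)) := by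
      rw [c5]; exact Equiv.swap_apply_right _ _
    rw [happ, c6, if_neg hk1, if_neg hk2, if_neg hk3, if_neg hk4, if_neg hk5, if_neg hk6, if_neg hk7, if_pos hk8]
  · have c1 : Equiv.swap (⟨i-2, hB1⟩ : Fin (2*n)) (⟨i-1, hB2⟩ : Fin (2*n)) (k) = k := by
      exact Equiv.swap_apply_of_ne_of_ne (Fin.ne_of_val_ne hk1) (Fin.ne_of_val_ne hk2)
    have c2 : Equiv.swap (⟨i-1, hB2⟩ : Fin (2*n)) (⟨i, hB3⟩ : Fin (2*n)) (Equiv.swap (⟨i-2, hB1⟩ : Fin (2*n)) (⟨i-1, hB2⟩ : Fin (2*n)) (k)) = k := by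
      rw [c1]; exact Equiv.swap_apply_of_ne_of_ne (Fin.ne_of_val_ne hk2) (Fin.ne_of_val_ne hk3)
    have c3 : Equiv.swap (⟨i, hB3⟩ : Fin (2*n)) (⟨i+1, hB4⟩ : Fin (2*n)) (Equiv.swap (⟨i-1, hB2⟩ : Fin (2*n)) (⟨i, hB3⟩ : Fin (2*n)) (Equiv.swap (⟨i-2, hB1⟩ : Fin (2*n)) (⟨i-1, hB2⟩ : Fin (2*n)) (k))) = k := by
      rw [c2]; exact Equiv.swap_apply_of_ne_of_ne (Fin.ne_of_val_ne hk3) (Fin.ne_of_val_ne hk4)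
    have c4 : Equiv.swap (⟨2*n-i-2, hB5⟩ : Fin (2*n)) (⟨2*n-i-1, hB6⟩ : Fin (2*n)) (Equiv.swap (⟨i, hB3⟩ : Fin (2*n)) (⟨i+1, hB4⟩ : Fin (2*n)) (Equiv.swap (⟨i-1, hB2⟩ : Fin (2*n)) (⟨i, hB3⟩ : Fin (2*n)) (Equiv.swap (⟨i-2, hB1⟩ : Fin (2*n)) (⟨i-1, hB2⟩ : Fin (2*n)) (k)))) = k := by
      rw [c3]; exact Equiv.swap_apply_of_ne_of_ne (Fin.ne_of_val_ne hk5) (Fin.ne_of_val_ne hk6)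
    have c5 : Equiv.swap (⟨2*n-i-1, hB6⟩ : Fin (2*n)) (⟨2*n-i, hB7⟩ : Fin (2*n)) (Equiv.swap (⟨2*n-i-2, hB5⟩ : Fin (2*n)) (⟨2*n-i-1, hB6⟩ : Fin (2*n)) (Equiv.swap (⟨i, hB3⟩ : Fin (2*n)) (⟨i+1, hB4⟩ : Fin (2*n)) (Equiv.swap (⟨i-1, hB2⟩ : Fin (2*n)) (⟨i, hB3⟩ : Fin (2*n)) (Equiv.swap (⟨i-2, hB1⟩ : Fin (2*n)) (⟨i-1, hB2⟩ : Fin (2*n)) (k))))) = k := by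
      rw [c4]; exact Equiv.swap_apply_of_ne_of_ne (Fin.ne_of_val_ne hk6) (Fin.ne_of_val_ne hk7)
    have c6 : Equiv.swap (⟨2*n-i, hB7⟩ : Fin (2*n)) (⟨2*n-i+1, hB8⟩ : Fin (2*n)) (Equiv.swap (⟨2*n-i-1, hB6⟩ : Fin (2*n)) (⟨2*n-i, hB7⟩ : Fin (2*n)) (Equiv.swap (⟨2*n-i-2, hB5⟩ : Fin (2*n)) (⟨2*n-i-1, hB6⟩ : Fin (2*n)) (Equiv.swap (⟨i, hB3⟩ : Fin (2*n)) (⟨i+1, hB4⟩ : Fin (2*n)) (Equiv.swap (⟨i-1, hB2⟩ : Fin (2*n)) (⟨i, hB3⟩ : Fin (2*n)) (Equiv.swap (⟨i-2, hB1⟩ : Fin (2*n)) (⟨i-1, hB2⟩ : Fin (2*n)) (k)))))) = k := by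
      rw [c5]; exact Equiv.swap_apply_of_ne_of_ne (Fin.ne_of_val_ne hk7) (Fin.ne_of_val_ne hk8)
    rw [happ, c6, if_neg hk1, if_neg hk2, if_neg hk3, if_neg hk4, if_neg hk5, if_neg hk6, if_neg hk7, if_neg hk8]

lemma tau_le (h2 : 2 ≤ i) (hi : i ≤ n - 2) (k : Fin (2*n))
    (hk1 : (k : ℕ) ≠ i-2) (hk2 : (k : ℕ) ≠ 2*n-i-2) : ((tperm n i k : ℕ)) ≤ (k : ℕ) := by
  have hn : 4 ≤ n := by omega
  have h := tau_val h2 hi k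
  split_ifs at h <;> omega

lemma tau_symm_le (h2 : 2 ≤ i) (hi : i ≤ n - 2) (v : Fin (2*n)) :
    (((tperm n i).symm v : ℕ)) ≤ (v : ℕ) + 1 := by
  have hn : 4 ≤ n := by omega
  have h := tau_val h2 hi ((tperm n i).symm v)
  rw [Equiv.apply_symm_apply] at h
  split_ifs at h <;> omega

lemma tau_sp1 (h2 : 2 ≤ i) (hi : i ≤ n - 2) (k : Fin (2*n)) (hk : (k : ℕ) = i-2) :
    ((tperm n i k : ℕ)) = i+1 := by
  have h := tau_val h2 hi k
  rwa [if_pos hk] at h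

lemma tau_sp2 (h2 : 2 ≤ i) (hi : i ≤ n - 2) (k : Fin (2*n)) (hk : (k : ℕ) = 2*n-i-2) :
    ((tperm n i k : ℕ)) = 2*n-i+1 := by
  have hn : 4 ≤ n := by omega
  have h := tau_val h2 hi k
  rw [if_neg (by omega), if_neg (by omega), if_neg (by omega), if_neg (by omega),
    if_pos hk] at h
  exact h

lemma rk_tau_ge (h2 : 2 ≤ i) (hi : i ≤ n - 2) (p q s : ℕ) (hs : s < p) (hsN : s < 2*n)
    (hp : p ≤ 2*n)
    (hgood : ∀ k : Fin (2*n), (k : ℕ) < p → (k : ℕ) ≠ s → ((tperm n i k : ℕ)) < q) :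
    p - 1 ≤ rk (tperm n i) p q := by
  have hsub : ((Finset.univ.filter fun k : Fin (2*n) => (k : ℕ) < p).erase ⟨s, hsN⟩)
      ⊆ Finset.univ.filter fun k : Fin (2*n) =>
          (k : ℕ) < p ∧ ((tperm n i k : ℕ)) < q := by
    intro k hk
    rw [Finset.mem_erase, Finset.mem_filter] at hk
    rw [Finset.mem_filter]
    refine ⟨Finset.mem_univ _, hk.2.2, hgood k hk.2.2 ?_⟩
    intro hval
    exact hk.1 (Fin.ext hval)
  have hmem : (⟨s, hsN⟩ : Fin (2*n)) ∈ Finset.univ.filter (fun k : Fin (2*n) => (k : ℕ) < p) :=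
    Finset.mem_filter.mpr ⟨Finset.mem_univ _, hs⟩
  calc p - 1
      = ((Finset.univ.filter fun k : Fin (2*n) => (k : ℕ) < p).erase ⟨s, hsN⟩).card := by
        rw [Finset.card_erase_of_mem hmem, card_val_lt (N := 2*n) p hp]
    _ ≤ _ := Finset.card_le_card hsub

lemma rk_tau_ge_full (h2 : 2 ≤ i) (hi : i ≤ n - 2) (p q m : ℕ) (hm : m ≤ 2*n)
    (hmp : m ≤ p) (hq : q < p) (hq2n : q ≤ 2*n) (hqm : m ≤ q) :
    m ≤ rk (tperm n i) p q := by
  have hn : 4 ≤ n := by omega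
  calc m ≤ q := hqm
    _ = (Finset.univ.filter fun v : Fin (2*n) => (v : ℕ) < q).card :=
        (card_val_lt q (by omega)).symm
    _ ≤ _ := by
        refine Finset.card_le_card_of_injOn (fun v => (tperm n i).symm v) ?_ ?_
        · intro v hv
          rw [Finset.mem_coe, Finset.mem_filter] at hv
          rw [Finset.mem_coe, Finset.mem_filter]
          refine ⟨Finset.mem_univ _, ?_, ?_⟩
          · show (((tperm n i).symm v : ℕ)) < p
            have := tau_symm_le h2 hi v
            omega
          · show ((tperm n i ((tperm n i).symm v) : ℕ)) < q
            rw [Equiv.apply_symm_apply]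
            exact hv.2
        · intro a _ b _ hab
          exact (tperm n i).symm.injective hab

lemma dom_tau (h2 : 2 ≤ i) (hi : i ≤ n - 2) (w : Perm (Fin (2*n)))
    (hA : rk w (i-1) (i+1) ≤ i-2)
    (hB : rk w (2*n-i-1) (2*n-i+1) ≤ 2*n-i-2) :
    ∀ p q, rk w p q ≤ rk (tperm n i) p q := by
  have hn : 4 ≤ n := by omega
  intro p q
  by_cases hD1 : i-1 ≤ p ∧ p ≤ q ∧ q ≤ i+1
  · have hw1 : rk w p q ≤ (i-2) + (p - (i-1)) := by
      calc rk w p q ≤ rk w (i-1) q + (p - (i-1)) := rk_add_left w q hD1.1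
        _ ≤ rk w (i-1) (i+1) + (p - (i-1)) :=
            Nat.add_le_add_right (rk_mono_right w _ hD1.2.2) _
        _ ≤ (i-2) + (p - (i-1)) := Nat.add_le_add_right hA _
    have hτ1 : p - 1 ≤ rk (tperm n i) p q := by
      apply rk_tau_ge h2 hi p q (i-2) (by omega) (by omega) (by omega)
      intro k hk hks
      have := tau_le h2 hi k hks (by omega)
      omega
    omega
  · by_cases hD2 : 2*n-i-1 ≤ p ∧ p ≤ q ∧ q ≤ 2*n-i+1
    · have hw1 : rk w p q ≤ (2*n-i-2) + (p - (2*n-i-1)) := by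
        calc rk w p q ≤ rk w (2*n-i-1) q + (p - (2*n-i-1)) := rk_add_left w q hD2.1
          _ ≤ rk w (2*n-i-1) (2*n-i+1) + (p - (2*n-i-1)) :=
              Nat.add_le_add_right (rk_mono_right w _ hD2.2.2) _
          _ ≤ (2*n-i-2) + (p - (2*n-i-1)) := Nat.add_le_add_right hB _
      have hτ1 : p - 1 ≤ rk (tperm n i) p q := by
        apply rk_tau_ge h2 hi p q (2*n-i-2) (by omega) (by omega) (by omega)
        intro k hk hks
        by_cases hsp : (k : ℕ) = i-2
        · have := tau_sp1 h2 hi k hsp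
          omega
        · have := tau_le h2 hi k hsp hks
          omega
      omega
    · -- general cell
      have hwle : rk w p q ≤ min (min p q) (2*n) :=
        le_min (le_min (rk_le_left w p q) (rk_le_right w p q)) (rk_le_N w p q)
      set m := min (min p q) (2*n) with hm
      have hmp : m ≤ p := le_trans (min_le_left _ _) (min_le_left _ _)
      have hmq : m ≤ q := le_trans (min_le_left _ _) (min_le_right _ _)
      have hmN : m ≤ 2*n := min_le_right _ _
      suffices h : m ≤ rk (tperm n i) p q by omega
      by_cases hbad1 : i-2 < m ∧ q ≤ i+1
      · obtain ⟨hb11, hb12⟩ := hbad1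
        have hqp : q < p := by
          rcases lt_or_ge q p with h' | h'
          · exact h'
          · exfalso; exact hD1 ⟨by omega, h', hb12⟩
        have hmq' : m = q := by omega
        rw [hmq']
        exact rk_tau_ge_full h2 hi p q q (by omega) (by omega) hqp (by omega) le_rfl
      · by_cases hbad2 : 2*n-i-2 < m ∧ q ≤ 2*n-i+1
        · obtain ⟨hb21, hb22⟩ := hbad2
          have hqp : q < p := by
            rcases lt_or_ge q p with h' | h'
            · exact h'
            · exfalso; exact hD2 ⟨by omega, h', hb22⟩
          have hmq' : m = q := by omega
          rw [hmq']
          exact rk_tau_ge_full h2 hi p q q (by omega) (by omega) hqp (by omega) le_rfl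
        · -- no bad special
          calc m = (Finset.univ.filter fun k : Fin (2*n) => (k : ℕ) < m).card :=
              (card_val_lt m hmN).symm
            _ ≤ _ := by
              apply Finset.card_le_card
              intro k hk
              rw [Finset.mem_filter] at hk
              rw [Finset.mem_filter]
              refine ⟨Finset.mem_univ _, by omega, ?_⟩
              by_cases hs1 : (k : ℕ) = i-2
              · have := tau_sp1 h2 hi k hs1
                omega
              · by_cases hs2 : (k : ℕ) = 2*n-i-2
                · have := tau_sp2 h2 hi k hs2
                  omega
                · have := tau_le h2 hi k hs1 hs2
                  omega

lemma rk_tau_corner (h2 : 2 ≤ i) (hi : i ≤ n - 2) :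
    rk (tperm n i) (i-1) (i+1) ≤ i-2 := by
  have hn : 4 ≤ n := by omega
  have hsub : (Finset.univ.filter fun k : Fin (2*n) =>
        (k : ℕ) < i-1 ∧ ((tperm n i k : ℕ)) < i+1)
      ⊆ (Finset.univ.filter fun k : Fin (2*n) => (k : ℕ) < i-1).erase ⟨i-2, by omega⟩ := by
    intro k hk
    rw [Finset.mem_filter] at hk
    rw [Finset.mem_erase, Finset.mem_filter]
    refine ⟨?_, Finset.mem_univ _, hk.2.1⟩
    intro hke
    have hkv : (k : ℕ) = i-2 := congrArg Fin.val hke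
    have := tau_sp1 h2 hi k hkv
    omega
  calc rk (tperm n i) (i-1) (i+1) ≤ _ := Finset.card_le_card hsub
    _ = i-2 := by
      have hmem : (⟨i-2, by omega⟩ : Fin (2*n)) ∈
          Finset.univ.filter (fun k : Fin (2*n) => (k : ℕ) < i-1) :=
        Finset.mem_filter.mpr ⟨Finset.mem_univ _, (show i-2 < i-1 by omega)⟩
      rw [Finset.card_erase_of_mem hmem, card_val_lt (N := 2*n) (i-1) (by omega)]
      omega


end Tau

end SAux


/-- for τ = s_{2n-(i-1)} s_{2n-i} s_{2n-(i+1)} s_{i+1} s_i s_{i-1} with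
2 ≤ i ≤ n-2 and a twisted involution w: τ ≰ w iff w({1,...,i-1}) ⊆ {1,...,i+1}. -/
theorem stmt7 (n i : ℕ) (h2 : 2 ≤ i) (hi : i ≤ n - 2)
    (w : Equiv.Perm (Fin (2*n))) (hw : theta w = w⁻¹) :
    ¬ bruhatLE
        (gen (2*n) (2*n - (i-1)) * gen (2*n) (2*n - i) * gen (2*n) (2*n - (i+1)) *
          gen (2*n) (i+1) * gen (2*n) i * gen (2*n) (i-1)) w ↔
      ∀ k : Fin (2*n), (k : ℕ) + 1 ≤ i - 1 → (w k : ℕ) + 1 ≤ i + 1 := by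
  have hn : 4 ≤ n := by omega
  have hprod : (gen (2*n) (2*n - (i-1)) * gen (2*n) (2*n - i) * gen (2*n) (2*n - (i+1)) *
      gen (2*n) (i+1) * gen (2*n) i * gen (2*n) (i-1)) = SAux.tperm n i := rfl
  rw [hprod]
  constructor
  · intro hnb k hk
    by_contra hbad
    apply hnb
    have hka : (k : ℕ) < i-1 := by omega
    have hwk : i+1 ≤ (w k : ℕ) := by omega
    have hm := SAux.mirror w hw k
    have hkrevlt := ((w k).rev).isLt
    have hwkisLt := (w k).isLt
    have hkisLt := k.isLt
    have hc1 : (((w k).rev : Fin (2*n)) : ℕ) < 2*n-i-1 := by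
      rw [Fin.val_rev]; omega
    have hc2 : 2*n-i+1 ≤ ((w ((w k).rev) : Fin (2*n)) : ℕ) := by
      rw [hm, Fin.val_rev]; omega
    have hA' := SAux.corner_of_witness w (i-1) (i+1) (by omega) k hka hwk
    have hB' := SAux.corner_of_witness w (2*n-i-1) (2*n-i+1) (by omega) ((w k).rev) hc1 hc2
    have hdom := SAux.dom_tau h2 hi w (by omega) (by omega)
    exact SAux.dom_to_bruhat (SAux.M (SAux.tperm n i)) (SAux.tperm n i) w le_rfl hdom
  · intro hcond hb
    have hdom := SAux.bruhat_to_dom hb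
    have hAle : SAux.rk w (i-1) (i+1) ≤ i-2 :=
      le_trans (hdom (i-1) (i+1)) (SAux.rk_tau_corner h2 hi)
    obtain ⟨a, ha1, ha2⟩ := SAux.witness_of_corner w (i-1) (i+1) (by omega) (by omega)
      (by omega)
    have hca := hcond a (by omega)
    omega
end

section
/- In the Bruhat order on the symmetric group S_n, the element c' = s_i s_{i-1} s_{i+1} s_i is the unique element covering both a' = s_i s_{i-1} s_i and b' = s_i s_{i+1} s_i, for 2 ≤ i ≤ n-2. -/
open Equiv

/-! ### Auxiliary lemmas -/

lemma len_one {N : ℕ} : len (1 : Perm (Fin N)) = 0 := by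
  rw [len, Finset.card_eq_zero, Finset.filter_eq_empty_iff]
  rintro ⟨p1, p2⟩ _ ⟨h1, h2⟩
  exact absurd (h1.trans h2) (lt_irrefl _)

lemma bruhat_len {N : ℕ} {u v : Perm (Fin N)} (h : bruhatLE u v) :
    u = v ∨ len u < len v := by
  induction h with
  | refl => exact Or.inl rfl
  | tail _ hstep ih =>
      obtain ⟨t, _, _, hlt⟩ := hstep
      rcases ih with rfl | hlen
      · exact Or.inr hlt
      · exact Or.inr (hlen.trans hlt)

lemma bruhat_single {N : ℕ} {u : Perm (Fin N)} {t : Perm (Fin N)}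
    (ht : t.IsSwap) (h : len u < len (u * t)) : bruhatLE u (u * t) :=
  Relation.ReflTransGen.single ⟨t, ht, rfl, h⟩

lemma isSwap_sq_apply {α : Type*} [DecidableEq α] {t : Perm α} (ht : t.IsSwap) (v : α) :
    t (t v) = v := by
  obtain ⟨r, s, _, rfl⟩ := ht
  exact swap_apply_self r s v

lemma swap_moved {α : Type*} [DecidableEq α] {t : Perm α} (ht : t.IsSwap) {a b c : α}
    (hab : a ≠ b) (hac : a ≠ c) (hbc : b ≠ c)
    (ha : t a ≠ a) (hb : t b ≠ b) (hc : t c ≠ c) : False := by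
  obtain ⟨r, s, hrs, rfl⟩ := ht
  rw [swap_apply_ne_self_iff] at ha hb hc
  rcases ha.2 with rfl | rfl <;> rcases hb.2 with rfl | rfl <;> rcases hc.2 with rfl | rfl <;>
    simp_all

lemma len_swap2 {N a : ℕ} (h0 : a < N) (h2 : a + 2 < N) :
    len (Equiv.swap (⟨a, h0⟩ : Fin N) ⟨a + 2, h2⟩) = 3 := by
  set σ := Equiv.swap (⟨a, h0⟩ : Fin N) ⟨a + 2, h2⟩ with hσ
  have appval : ∀ v : Fin N, (σ v).val =
      if v.val = a then a + 2 else if v.val = a + 2 then a else v.val := by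
    intro v
    rw [hσ]
    simp only [Equiv.swap_apply_def]
    split_ifs <;> simp only [Fin.ext_iff, Fin.val_mk] at * <;> omega
  have key : (Finset.univ.filter fun p : Fin N × Fin N => p.1 < p.2 ∧ σ p.2 < σ p.1)
      = {((⟨a, h0⟩ : Fin N), (⟨a + 1, by omega⟩ : Fin N)),
         (⟨a, h0⟩, ⟨a + 2, h2⟩), (⟨a + 1, by omega⟩, ⟨a + 2, h2⟩)} := by
    ext ⟨p1, p2⟩
    simp only [Finset.mem_filter, Finset.mem_univ, true_and, Finset.mem_insert,
      Finset.mem_singleton, Prod.mk.injEq, Fin.lt_def, Fin.ext_iff, Fin.val_mk]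
    rw [appval, appval]
    split_ifs <;> omega
  rw [len, key]
  rw [Finset.card_insert_of_notMem (by simp [Fin.ext_iff, Prod.ext_iff]),
    Finset.card_insert_of_notMem (by simp [Fin.ext_iff, Prod.ext_iff]),
    Finset.card_singleton]

lemma len_swap22 {N a : ℕ} (h0 : a < N) (h1 : a + 1 < N) (h2 : a + 2 < N) (h3 : a + 3 < N) :
    len (Equiv.swap (⟨a, h0⟩ : Fin N) ⟨a + 2, h2⟩ *
         Equiv.swap (⟨a + 1, h1⟩ : Fin N) ⟨a + 3, h3⟩) = 4 := by
  set σ := Equiv.swap (⟨a, h0⟩ : Fin N) ⟨a + 2, h2⟩ *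
         Equiv.swap (⟨a + 1, h1⟩ : Fin N) ⟨a + 3, h3⟩ with hσ
  have appval : ∀ v : Fin N, (σ v).val =
      if v.val = a then a + 2 else if v.val = a + 1 then a + 3
      else if v.val = a + 2 then a else if v.val = a + 3 then a + 1 else v.val := by
    intro v
    rw [hσ]
    simp only [Equiv.Perm.mul_apply, Equiv.swap_apply_def]
    split_ifs <;> simp only [Fin.ext_iff, Fin.val_mk] at * <;> omega
  have key : (Finset.univ.filter fun p : Fin N × Fin N => p.1 < p.2 ∧ σ p.2 < σ p.1)
      = {((⟨a, h0⟩ : Fin N), (⟨a + 2, h2⟩ : Fin N)),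
         (⟨a, h0⟩, ⟨a + 3, h3⟩), (⟨a + 1, h1⟩, ⟨a + 2, h2⟩),
         (⟨a + 1, h1⟩, ⟨a + 3, h3⟩)} := by
    ext ⟨p1, p2⟩
    simp only [Finset.mem_filter, Finset.mem_univ, true_and, Finset.mem_insert,
      Finset.mem_singleton, Prod.mk.injEq, Fin.lt_def, Fin.ext_iff, Fin.val_mk]
    rw [appval, appval]
    split_ifs <;> omega
  rw [len, key]
  rw [Finset.card_insert_of_notMem (by simp [Fin.ext_iff, Prod.ext_iff]),
    Finset.card_insert_of_notMem (by simp [Fin.ext_iff, Prod.ext_iff]),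
    Finset.card_insert_of_notMem (by simp [Fin.ext_iff, Prod.ext_iff]),
    Finset.card_singleton]

lemma core_aux {α : Type*} [DecidableEq α] {x y z w p q : α}
    (hxy : x ≠ y) (hxz : x ≠ z) (hxw : x ≠ w) (hyz : y ≠ z) (hyw : y ≠ w) (hzw : z ≠ w)
    (hpq : p ≠ q) (hpx : p ≠ x) (hpy : p ≠ y) (hpz : p ≠ z) (hpw : p ≠ w)
    {t' : Perm α} (ht' : t'.IsSwap)
    (H : t' = swap y w * swap x z * swap p q) : False := by
  have hp : t' p ≠ p := by
    rw [H]; simp only [Equiv.Perm.mul_apply, swap_apply_left]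
    by_cases hq : q = x
    · subst hq
      rw [swap_apply_left, swap_apply_of_ne_of_ne (Ne.symm hyz) hzw]
      exact fun h => hpz h.symm
    · by_cases hq2 : q = z
      · subst hq2
        rw [swap_apply_right, swap_apply_of_ne_of_ne hxy hxw]
        exact fun h => hpx h.symm
      · rw [swap_apply_of_ne_of_ne hq hq2]
        by_cases hq3 : q = y
        · subst hq3; rw [swap_apply_left]; exact fun h => hpw h.symm
        · by_cases hq4 : q = w
          · subst hq4; rw [swap_apply_right]; exact fun h => hpy h.symm
          · rw [swap_apply_of_ne_of_ne hq3 hq4]; exact fun h => hpq h.symm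
  have move : ∀ v : α, v ≠ p → v ≠ q → v = x ∨ v = y ∨ v = z ∨ v = w → t' v ≠ v := by
    rintro v hvp hvq (rfl | rfl | rfl | rfl) <;>
      rw [H] <;> simp only [Equiv.Perm.mul_apply] <;>
      rw [swap_apply_of_ne_of_ne hvp hvq]
    · rw [swap_apply_left, swap_apply_of_ne_of_ne (Ne.symm hyz) hzw]
      exact Ne.symm hxz
    · rw [swap_apply_of_ne_of_ne (Ne.symm hxy) hyz, swap_apply_left]
      exact hyw.symm
    · rw [swap_apply_right, swap_apply_of_ne_of_ne hxy hxw]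
      exact hxz
    · rw [swap_apply_of_ne_of_ne (Ne.symm hxw) (Ne.symm hzw), swap_apply_right]
      exact hyw
  by_cases hqx : q = x
  · exact swap_moved ht' hpy hpz hyz hp
      (move y hpy.symm (by rw [hqx]; exact hxy.symm) (Or.inr (Or.inl rfl)))
      (move z hpz.symm (by rw [hqx]; exact hxz.symm) (Or.inr (Or.inr (Or.inl rfl))))
  · by_cases hqy : q = y
    · exact swap_moved ht' hpx hpz hxz hp
        (move x hpx.symm (by rw [hqy]; exact hxy) (Or.inl rfl))
        (move z hpz.symm (by rw [hqy]; exact hyz.symm) (Or.inr (Or.inr (Or.inl rfl))))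
    · by_cases hqz : q = z
      · exact swap_moved ht' hpx hpy hxy hp
          (move x hpx.symm (by rw [hqz]; exact hxz) (Or.inl rfl))
          (move y hpy.symm (by rw [hqz]; exact hyz) (Or.inr (Or.inl rfl)))
      · exact swap_moved ht' hpx hpy hxy hp
          (move x hpx.symm (fun h => hqx h.symm) (Or.inl rfl))
          (move y hpy.symm (fun h => hqy h.symm) (Or.inr (Or.inl rfl)))

lemma core {α : Type*} [DecidableEq α] {x y z w p q : α}
    (hxy : x ≠ y) (hxz : x ≠ z) (hxw : x ≠ w) (hyz : y ≠ z) (hyw : y ≠ w) (hzw : z ≠ w)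
    (hpq : p ≠ q) {t' : Perm α} (ht' : t'.IsSwap)
    (H : t' = swap y w * swap x z * swap p q) :
    swap p q = swap x z ∨ swap p q = swap y w := by
  by_cases hp4 : p = x ∨ p = y ∨ p = z ∨ p = w
  · by_cases hq4 : q = x ∨ q = y ∨ q = z ∨ q = w
    · rcases hp4 with rfl | rfl | rfl | rfl <;> rcases hq4 with rfl | rfl | rfl | rfl
      · exact absurd rfl hpq
      · -- p=x, q=y
        exfalso
        have h1 : t' p = w := by
          rw [H]; simp only [Equiv.Perm.mul_apply]
          rw [swap_apply_left, swap_apply_of_ne_of_ne (Ne.symm hxy) hyz, swap_apply_left]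
        have h2 : t' w = q := by
          rw [H]; simp only [Equiv.Perm.mul_apply]
          rw [swap_apply_of_ne_of_ne (Ne.symm hxw) (Ne.symm hyw),
            swap_apply_of_ne_of_ne (Ne.symm hxw) (Ne.symm hzw), swap_apply_right]
        have h3 := isSwap_sq_apply ht' p
        rw [h1, h2] at h3
        exact hxy h3.symm
      · exact Or.inl rfl
      · -- p=x, q=w
        exfalso
        have h1 : t' p = y := by
          rw [H]; simp only [Equiv.Perm.mul_apply]
          rw [swap_apply_left, swap_apply_of_ne_of_ne (Ne.symm hxw) (Ne.symm hzw),
            swap_apply_right]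
        have h2 : t' y = q := by
          rw [H]; simp only [Equiv.Perm.mul_apply]
          rw [swap_apply_of_ne_of_ne (Ne.symm hxy) hyw,
            swap_apply_of_ne_of_ne (Ne.symm hxy) hyz, swap_apply_left]
        have h3 := isSwap_sq_apply ht' p
        rw [h1, h2] at h3
        exact hxw h3.symm
      · -- p=y, q=x
        exfalso
        have h1 : t' p = z := by
          rw [H]; simp only [Equiv.Perm.mul_apply]
          rw [swap_apply_left, swap_apply_left,
            swap_apply_of_ne_of_ne (Ne.symm hyz) hzw]
        have h2 : t' z = q := by
          rw [H]; simp only [Equiv.Perm.mul_apply]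
          rw [swap_apply_of_ne_of_ne (Ne.symm hyz) (Ne.symm hxz), swap_apply_right,
            swap_apply_of_ne_of_ne hxy hxw]
        have h3 := isSwap_sq_apply ht' p
        rw [h1, h2] at h3
        exact hxy h3
      · exact absurd rfl hpq
      · -- p=y, q=z
        exfalso
        have h1 : t' p = x := by
          rw [H]; simp only [Equiv.Perm.mul_apply]
          rw [swap_apply_left, swap_apply_right, swap_apply_of_ne_of_ne hxy hxw]
        have h2 : t' x = q := by
          rw [H]; simp only [Equiv.Perm.mul_apply]
          rw [swap_apply_of_ne_of_ne hxy hxz, swap_apply_left,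
            swap_apply_of_ne_of_ne (Ne.symm hyz) hzw]
        have h3 := isSwap_sq_apply ht' p
        rw [h1, h2] at h3
        exact hyz h3.symm
      · exact Or.inr rfl
      · -- p=z, q=x
        exact Or.inl (swap_comm _ _)
      · -- p=z, q=y
        exfalso
        have h1 : t' p = w := by
          rw [H]; simp only [Equiv.Perm.mul_apply]
          rw [swap_apply_left, swap_apply_of_ne_of_ne (Ne.symm hxy) hyz, swap_apply_left]
        have h2 : t' w = q := by
          rw [H]; simp only [Equiv.Perm.mul_apply]
          rw [swap_apply_of_ne_of_ne (Ne.symm hzw) (Ne.symm hyw),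
            swap_apply_of_ne_of_ne (Ne.symm hxw) (Ne.symm hzw), swap_apply_right]
        have h3 := isSwap_sq_apply ht' p
        rw [h1, h2] at h3
        exact hyz h3
      · exact absurd rfl hpq
      · -- p=z, q=w
        exfalso
        have h1 : t' p = y := by
          rw [H]; simp only [Equiv.Perm.mul_apply]
          rw [swap_apply_left, swap_apply_of_ne_of_ne (Ne.symm hxw) (Ne.symm hzw),
            swap_apply_right]
        have h2 : t' y = q := by
          rw [H]; simp only [Equiv.Perm.mul_apply]
          rw [swap_apply_of_ne_of_ne hyz hyw,
            swap_apply_of_ne_of_ne (Ne.symm hxy) hyz, swap_apply_left]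
        have h3 := isSwap_sq_apply ht' p
        rw [h1, h2] at h3
        exact hzw h3.symm
      · -- p=w, q=x
        exfalso
        have h1 : t' p = z := by
          rw [H]; simp only [Equiv.Perm.mul_apply]
          rw [swap_apply_left, swap_apply_left,
            swap_apply_of_ne_of_ne (Ne.symm hyz) hzw]
        have h2 : t' z = q := by
          rw [H]; simp only [Equiv.Perm.mul_apply]
          rw [swap_apply_of_ne_of_ne hzw (Ne.symm hxz), swap_apply_right,
            swap_apply_of_ne_of_ne hxy hxw]
        have h3 := isSwap_sq_apply ht' p
        rw [h1, h2] at h3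
        exact hxw h3
      · exact Or.inr (swap_comm _ _)
      · -- p=w, q=z
        exfalso
        have h1 : t' p = x := by
          rw [H]; simp only [Equiv.Perm.mul_apply]
          rw [swap_apply_left, swap_apply_right, swap_apply_of_ne_of_ne hxy hxw]
        have h2 : t' x = q := by
          rw [H]; simp only [Equiv.Perm.mul_apply]
          rw [swap_apply_of_ne_of_ne hxw hxz, swap_apply_left,
            swap_apply_of_ne_of_ne (Ne.symm hyz) hzw]
        have h3 := isSwap_sq_apply ht' p
        rw [h1, h2] at h3
        exact hzw h3
      · exact absurd rfl hpq
    · push_neg at hq4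
      rw [swap_comm p q] at H
      exact (core_aux hxy hxz hxw hyz hyw hzw (Ne.symm hpq)
        hq4.1 hq4.2.1 hq4.2.2.1 hq4.2.2.2 ht' H).elim
  · push_neg at hp4
    exact (core_aux hxy hxz hxw hyz hyw hzw hpq
      hp4.1 hp4.2.1 hp4.2.2.1 hp4.2.2.2 ht' H).elim

lemma cover_extract {N : ℕ} {a c : Perm (Fin N)}
    (h : CovByIn bruhatLE Set.univ a c) :
    ∃ t : Perm (Fin N), t.IsSwap ∧ c = a * t ∧ len a < len c := by
  obtain ⟨-, -, hle, hne, hmin⟩ := h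
  rcases Relation.ReflTransGen.cases_head hle with rfl | ⟨z, hstep, hz⟩
  · exact absurd rfl hne
  obtain ⟨t, ht, rfl, hlt⟩ := hstep
  rcases hmin (a * t) trivial (bruhat_single ht hlt) hz with h1 | rfl
  · rw [h1] at hlt; exact absurd hlt (lt_irrefl _)
  · exact ⟨t, ht, rfl, hlt⟩

lemma cover_mk {N : ℕ} {a c : Perm (Fin N)} (hle : bruhatLE a c)
    (hlen : len c = len a + 1) : CovByIn bruhatLE Set.univ a c := by
  refine ⟨trivial, trivial, hle, ?_, ?_⟩
  · intro h; rw [h] at hlen; omega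
  · intro z _ h1 h2
    rcases bruhat_len h1 with rfl | l1
    · exact Or.inl rfl
    rcases bruhat_len h2 with rfl | l2
    · exact Or.inr rfl
    omega

/-- in the Bruhat order on S_n, `c' = s_i s_{i-1} s_{i+1} s_i` is the unique
element covering both `a' = s_i s_{i-1} s_i` and `b' = s_i s_{i+1} s_i`, for 2 ≤ i ≤ n-2. -/
theorem stmt8 (n i : ℕ) (h2 : 2 ≤ i) (hi : i ≤ n - 2) :
    CovByIn bruhatLE Set.univ (gen n i * gen n (i-1) * gen n i)
      (gen n i * gen n (i-1) * gen n (i+1) * gen n i) ∧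
    CovByIn bruhatLE Set.univ (gen n i * gen n (i+1) * gen n i)
      (gen n i * gen n (i-1) * gen n (i+1) * gen n i) ∧
    ∀ c : Equiv.Perm (Fin n),
      CovByIn bruhatLE Set.univ (gen n i * gen n (i-1) * gen n i) c →
      CovByIn bruhatLE Set.univ (gen n i * gen n (i+1) * gen n i) c →
      c = gen n i * gen n (i-1) * gen n (i+1) * gen n i := by
  have hb0 : i - 2 < n := by omega
  have hb1 : i - 2 + 1 < n := by omega
  have hb2 : i - 2 + 2 < n := by omega
  have hb3 : i - 2 + 3 < n := by omega
  set x : Fin n := ⟨i - 2, hb0⟩ with hxdef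
  set y : Fin n := ⟨i - 2 + 1, hb1⟩ with hydef
  set z : Fin n := ⟨i - 2 + 2, hb2⟩ with hzdef
  set w : Fin n := ⟨i - 2 + 3, hb3⟩ with hwdef
  have hxy : x ≠ y := by rw [hxdef, hydef]; simp only [ne_eq, Fin.mk.injEq]; omega
  have hxz : x ≠ z := by rw [hxdef, hzdef]; simp only [ne_eq, Fin.mk.injEq]; omega
  have hxw : x ≠ w := by rw [hxdef, hwdef]; simp only [ne_eq, Fin.mk.injEq]; omega
  have hyz : y ≠ z := by rw [hydef, hzdef]; simp only [ne_eq, Fin.mk.injEq]; omega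
  have hyw : y ≠ w := by rw [hydef, hwdef]; simp only [ne_eq, Fin.mk.injEq]; omega
  have hzw : z ≠ w := by rw [hzdef, hwdef]; simp only [ne_eq, Fin.mk.injEq]; omega
  -- the generators
  have g1 : gen n i = Equiv.swap y z := by
    rw [gen, dif_pos (show 0 < i ∧ i < n by omega)]
    congr 1 <;> simp only [hydef, hzdef, Fin.mk.injEq] <;> omega
  have g2 : gen n (i - 1) = Equiv.swap x y := by
    rw [gen, dif_pos (show 0 < i - 1 ∧ i - 1 < n by omega)]
    congr 1 <;> simp only [hxdef, hydef, Fin.mk.injEq] <;> omega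
  have g3 : gen n (i + 1) = Equiv.swap z w := by
    rw [gen, dif_pos (show 0 < i + 1 ∧ i + 1 < n by omega)]
    congr 1 <;> simp only [hzdef, hwdef, Fin.mk.injEq] <;> omega
  -- products of generators
  have gA : gen n i * gen n (i - 1) * gen n i = Equiv.swap x z := by
    rw [g1, g2, swap_mul_swap_mul_swap hxy hxz, swap_comm]
  have gB : gen n i * gen n (i + 1) * gen n i = Equiv.swap y w := by
    rw [g1, g3, swap_comm y z, swap_comm z w,
      swap_mul_swap_mul_swap (Ne.symm hzw) (Ne.symm hyw)]
  have hsq : gen n i * gen n i = 1 := by rw [g1]; exact swap_mul_self _ _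
  have hsq' : ∀ u : Perm (Fin n), gen n i * (gen n i * u) = u := fun u => by
    rw [← mul_assoc, hsq, one_mul]
  have gC : gen n i * gen n (i - 1) * gen n (i + 1) * gen n i
      = Equiv.swap x z * Equiv.swap y w := by
    rw [← gA, ← gB]
    simp only [mul_assoc, hsq']
  -- lengths
  have lenA : len (Equiv.swap x z) = 3 := by
    rw [hxdef, hzdef]; exact len_swap2 hb0 hb2
  have lenB : len (Equiv.swap y w) = 3 := by
    rw [hydef, hwdef]
    exact len_swap2 hb1 (by omega)
  have lenC : len (Equiv.swap x z * Equiv.swap y w) = 4 := by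
    rw [hxdef, hydef, hzdef, hwdef]
    exact len_swap22 hb0 hb1 hb2 hb3
  -- commutation of the two disjoint swaps
  have hcomm : Equiv.swap x z * Equiv.swap y w = Equiv.swap y w * Equiv.swap x z := by
    have happ := swap_apply_apply (Equiv.swap y w) x z
    rw [swap_apply_of_ne_of_ne hxy hxw, swap_apply_of_ne_of_ne (Ne.symm hyz) hzw,
      swap_inv] at happ
    calc Equiv.swap x z * Equiv.swap y w
        = (Equiv.swap y w * Equiv.swap x z * Equiv.swap y w) * Equiv.swap y w := by
          rw [← happ]
      _ = Equiv.swap y w * Equiv.swap x z * (Equiv.swap y w * Equiv.swap y w) := by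
          rw [mul_assoc]
      _ = Equiv.swap y w * Equiv.swap x z := by rw [swap_mul_self, mul_one]
  -- the two cover relations
  have hleA : bruhatLE (Equiv.swap x z) (Equiv.swap x z * Equiv.swap y w) :=
    bruhat_single ⟨y, w, hyw, rfl⟩ (by rw [lenA, lenC]; omega)
  have hleB : bruhatLE (Equiv.swap y w) (Equiv.swap x z * Equiv.swap y w) := by
    rw [hcomm]
    exact bruhat_single ⟨x, z, hxz, rfl⟩
      (by rw [lenB, ← hcomm, lenC]; omega)
  refine ⟨?_, ?_, ?_⟩
  · rw [gA, gC]
    exact cover_mk hleA (by rw [lenA, lenC])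
  · rw [gB, gC]
    exact cover_mk hleB (by rw [lenB, lenC])
  · intro c hca hcb
    rw [gA] at hca
    rw [gB] at hcb
    rw [gC]
    obtain ⟨t, ht, hct, hlac⟩ := cover_extract hca
    obtain ⟨t', ht', hct', hlbc⟩ := cover_extract hcb
    have H : t' = Equiv.swap y w * Equiv.swap x z * t := by
      rw [mul_assoc, ← hct, hct', ← mul_assoc, swap_mul_self, one_mul]
    obtain ⟨p, q, hpq, rfl⟩ := ht
    rcases core hxy hxz hxw hyz hyw hzw hpq ht' H with h | h
    · exfalso
      rw [h] at hct
      rw [swap_mul_self] at hct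
      rw [hct, len_one, lenA] at hlac
      omega
    · rw [hct, h]
end
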